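/- arXiv:1606.09155 — 3 statements merged into one kernel-verified Lean document; each statement's English description precedes it below -/
import Mathlib

section
/- (Per-iteration monotonicity of linearized ALM with constant parameters.) Let β > 0, γ ∈ (0, 2β), and let P be a self-adjoint operator on E with P − L_f·I positive definite. Let (xᵏ)_{k≥1} ⊂ E and (λᵏ)_{k≥1} ⊂ H be such that for each k ≥ 1 there is a subgradient uᵏ of g at x^{k+1} with ∇f(xᵏ) + uᵏ − A*λᵏ + β A*(A x^{k+1} − b) + P(x^{k+1} − xᵏ) = 0, and λ^{k+1} = λᵏ − γ(A x^{k+1} − b). Suppose (x*, λ*) satisfies the KKT conditions. Then for every k ≥ 1: ‖x^{k+1} − x*‖²_P + ‖x^{k+1} − xᵏ‖²_{P − L_f I} + (1/γ)‖λ^{k+1} − λ*‖² + (1/γ)(2β/γ − 1)‖λ^{k+1} − λᵏ‖² ≤ ‖xᵏ − x*‖²_P + (1/γ)‖λᵏ − λ*‖². In particular the sequence ‖xᵏ − x*‖²_P + (1/γ)‖λᵏ − λ*‖² is nonincreasing and (xᵏ, λᵏ) is bounded. -/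
open scoped RealInnerProductSpace
open Set

section aux
variable {E : Type*} [NormedAddCommGroup E] [InnerProductSpace ℝ E] [CompleteSpace E]

lemma aux_line_hasDerivAt {f : E → ℝ} {f' : E → E} (hgrad : ∀ x, HasGradientAt f (f' x) x)
    (x e : E) (t : ℝ) :
    HasDerivAt (fun s : ℝ => f (s • e + x)) ⟪f' (t • e + x), e⟫ t := by
  have h1 : HasDerivAt (fun s : ℝ => s • e + x) e t := by
    simpa using ((hasDerivAt_id t).smul_const e).add_const x
  have h2 := (hgrad (t • e + x)).hasFDerivAt.comp_hasDerivAt t h1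
  simp only [InnerProductSpace.toDual_apply_apply, Function.comp_def] at h2
  exact h2

lemma aux_convex_ineq {f : E → ℝ} {f' : E → E} (hf : ConvexOn ℝ Set.univ f)
    (hgrad : ∀ x, HasGradientAt f (f' x) x) (x y : E) :
    f x + ⟪f' x, y - x⟫ ≤ f y := by
  set e := y - x with he
  have hφ : ConvexOn ℝ Set.univ (fun t : ℝ => f (t • e + x)) := by
    have h0 := hf.comp_affineMap (AffineMap.lineMap (x : E) y)
    rw [Set.preimage_univ] at h0
    have heq : (fun t : ℝ => f (t • e + x)) = f ∘ AffineMap.lineMap (x : E) y := by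
      funext t
      simp only [Function.comp_apply, AffineMap.lineMap_apply_module, he]
      congr 1
      rw [sub_smul, smul_sub, one_smul]; abel
    rw [heq]; exact h0
  have hd := aux_line_hasDerivAt hgrad x e 0
  have hslope := hφ.le_slope_of_hasDerivAt (Set.mem_univ (0:ℝ)) (Set.mem_univ (1:ℝ))
    one_pos (by simpa using hd)
  rw [slope_def_field] at hslope
  simp only [zero_smul, zero_add, one_smul] at hslope ⊢
  have h1 : e + x = y := by rw [he]; abel
  rw [h1] at hslope
  have : ⟪f' x, e⟫ ≤ f y - f x := by
    simpa using hslope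
  linarith

lemma aux_descent {f : E → ℝ} {f' : E → E} {Lf : ℝ}
    (hgrad : ∀ x, HasGradientAt f (f' x) x)
    (hlip : ∀ x x' : E, ‖f' x - f' x'‖ ≤ Lf * ‖x - x'‖) (x y : E) :
    f y ≤ f x + ⟪f' x, y - x⟫ + Lf / 2 * ‖y - x‖ ^ 2 := by
  set e := y - x with he
  set ψ : ℝ → ℝ := fun t => f (t • e + x) - t * ⟪f' x, e⟫ - Lf / 2 * t ^ 2 * ‖e‖ ^ 2 with hψ
  have hder : ∀ t : ℝ, HasDerivAt ψ
      (⟪f' (t • e + x), e⟫ - ⟪f' x, e⟫ - Lf * t * ‖e‖ ^ 2) t := by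
    intro t
    have h1 := aux_line_hasDerivAt hgrad x e t
    have h2 : HasDerivAt (fun t : ℝ => t * ⟪f' x, e⟫) ⟪f' x, e⟫ t := by
      simpa using (hasDerivAt_id t).mul_const ⟪f' x, e⟫
    have h3 : HasDerivAt (fun t : ℝ => Lf / 2 * t ^ 2 * ‖e‖ ^ 2)
        (Lf * t * ‖e‖ ^ 2) t := by
      have := ((hasDerivAt_pow 2 t).const_mul (Lf / 2)).mul_const (‖e‖ ^ 2)
      exact this.congr_deriv (by rw [show (2:ℕ) - 1 = 1 from rfl]; push_cast; ring)
    have h4 := (h1.sub h2).sub h3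
    exact h4
  have hanti : AntitoneOn ψ (Icc (0:ℝ) 1) := by
    apply antitoneOn_of_hasDerivWithinAt_nonpos (convex_Icc 0 1)
    · exact fun t _ => (hder t).continuousAt.continuousWithinAt
    · exact fun t _ => (hder t).hasDerivWithinAt
    · intro t ht
      rw [interior_Icc] at ht
      have hb : ⟪f' (t • e + x) - f' x, e⟫ ≤ Lf * t * ‖e‖ ^ 2 := by
        calc ⟪f' (t • e + x) - f' x, e⟫ ≤ ‖f' (t • e + x) - f' x‖ * ‖e‖ :=
              real_inner_le_norm _ _
          _ ≤ (Lf * ‖t • e + x - x‖) * ‖e‖ := by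
              apply mul_le_mul_of_nonneg_right _ (norm_nonneg _)
              simpa using hlip (t • e + x) x
          _ = Lf * t * ‖e‖ ^ 2 := by
              have : t • e + x - x = t • e := by abel
              rw [this, norm_smul, Real.norm_eq_abs, abs_of_pos ht.1]
              ring
      have := inner_sub_left (𝕜 := ℝ) (f' (t • e + x)) (f' x) e
      linarith [hb, this.symm.le, this.le]
  have h01 := hanti (Set.left_mem_Icc.mpr zero_le_one) (Set.right_mem_Icc.mpr zero_le_one)
    zero_le_one
  simp only [hψ, zero_smul, zero_add, one_smul] at h01
  rw [show e + x = y from by rw [he]; abel] at h01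
  -- h01 : f y - 1 * ⟪f' x, e⟫ - Lf/2 * 1^2 * ‖e‖^2 ≤ f x - 0 - 0
  norm_num at h01
  linarith

lemma aux_three {f : E → ℝ} {f' : E → E} {Lf : ℝ}
    (hf : ConvexOn ℝ Set.univ f)
    (hgrad : ∀ x, HasGradientAt f (f' x) x)
    (hlip : ∀ x x' : E, ‖f' x - f' x'‖ ≤ Lf * ‖x - x'‖) (xk y xs : E) :
    -(Lf / 2) * ‖y - xk‖ ^ 2 ≤ ⟪f' xk - f' xs, y - xs⟫ := by
  have hA1 := aux_convex_ineq hf hgrad xk xs   -- f xk + ⟪f' xk, xs - xk⟫ ≤ f xs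
  have hA2 := aux_convex_ineq hf hgrad xs y    -- f xs + ⟪f' xs, y - xs⟫ ≤ f y
  have hB := aux_descent hgrad hlip xk y       -- f y ≤ f xk + ⟪f' xk, y - xk⟫ + Lf/2‖y-xk‖²
  have e1 : ⟪f' xk - f' xs, y - xs⟫
      = ⟪f' xk, y - xk⟫ + ⟪f' xk, xk - xs⟫ - ⟪f' xs, y - xs⟫ := by
    have h2 : ⟪f' xk, y - xs⟫ = ⟪f' xk, y - xk⟫ + ⟪f' xk, xk - xs⟫ := by
      rw [← inner_add_right]; congr 1; abel
    rw [inner_sub_left, h2]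
  have e2 : ⟪f' xk, xk - xs⟫ = -⟪f' xk, xs - xk⟫ := by
    rw [← inner_neg_right]; congr 1; abel
  linarith [e1, e2]

end aux

/-- Per-iteration monotonicity of the linearized ALM with constant parameters;
in particular `‖xᵏ − x*‖²_P + (1/γ)‖λᵏ − λ*‖²` is nonincreasing and the iterates are bounded. -/
theorem stmt_5 {E H : Type*}
    [NormedAddCommGroup E] [InnerProductSpace ℝ E] [FiniteDimensional ℝ E]
    [NormedAddCommGroup H] [InnerProductSpace ℝ H] [FiniteDimensional ℝ H]
    (A : E →L[ℝ] H) (b : H)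
    (f : E → ℝ) (f' : E → E) (Lf : ℝ) (hLf : 0 ≤ Lf)
    (hfconv : ConvexOn ℝ Set.univ f)
    (hgrad : ∀ x : E, HasGradientAt f (f' x) x)
    (hlip : ∀ x x' : E, ‖f' x - f' x'‖ ≤ Lf * ‖x - x'‖)
    (g : E → ℝ) (hgconv : ConvexOn ℝ Set.univ g)
    (β γ : ℝ) (hβ : 0 < β) (hγ0 : 0 < γ) (hγ2 : γ < 2 * β)
    (P : E →L[ℝ] E) (hP : IsSelfAdjoint P)
    (hPpd : ∀ v : E, v ≠ 0 → Lf * ‖v‖ ^ 2 < ⟪v, P v⟫)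
    (x : ℕ → E) (lam : ℕ → H)
    (hopt : ∀ k : ℕ, 1 ≤ k → ∃ u : E,
      (∀ x' : E, g x' ≥ g (x (k+1)) + ⟪u, x' - x (k+1)⟫) ∧
      f' (x k) + u - (ContinuousLinearMap.adjoint A) (lam k)
        + β • (ContinuousLinearMap.adjoint A) (A (x (k+1)) - b)
        + P (x (k+1) - x k) = 0)
    (hlam : ∀ k : ℕ, 1 ≤ k → lam (k+1) = lam k - γ • (A (x (k+1)) - b))
    (xs : E) (ls : H)
    (hfeas : A xs = b)
    (hkkt : ∀ x' : E, g x' ≥ g xs + ⟪(ContinuousLinearMap.adjoint A) ls - f' xs, x' - xs⟫) :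
    (∀ k : ℕ, 1 ≤ k →
      ⟪x (k+1) - xs, P (x (k+1) - xs)⟫
          + (⟪x (k+1) - x k, P (x (k+1) - x k)⟫ - Lf * ‖x (k+1) - x k‖ ^ 2)
          + (1 / γ) * ‖lam (k+1) - ls‖ ^ 2
          + (1 / γ) * (2 * β / γ - 1) * ‖lam (k+1) - lam k‖ ^ 2
        ≤ ⟪x k - xs, P (x k - xs)⟫ + (1 / γ) * ‖lam k - ls‖ ^ 2) ∧
    (∀ k : ℕ, 1 ≤ k →
      ⟪x (k+1) - xs, P (x (k+1) - xs)⟫ + (1 / γ) * ‖lam (k+1) - ls‖ ^ 2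
        ≤ ⟪x k - xs, P (x k - xs)⟫ + (1 / γ) * ‖lam k - ls‖ ^ 2) ∧
    (∃ M : ℝ, ∀ k : ℕ, 1 ≤ k → ‖x k‖ + ‖lam k‖ ≤ M) := by
  have hPsym : ∀ a c : E, ⟪P a, c⟫ = ⟪a, P c⟫ := by
    intro a c
    rw [ContinuousLinearMap.isSelfAdjoint_iff'] at hP
    conv_lhs => rw [← hP]
    exact ContinuousLinearMap.adjoint_inner_left P c a ▸ rfl
  -- nonnegativity of the P-form minus Lf
  have hPge : ∀ v : E, Lf * ‖v‖ ^ 2 ≤ ⟪v, P v⟫ := by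
    intro v
    by_cases hv : v = 0
    · simp [hv]
    · exact (hPpd v hv).le
  have hPnn : ∀ v : E, 0 ≤ ⟪v, P v⟫ := by
    intro v
    have := hPge v
    nlinarith [norm_nonneg v, sq_nonneg ‖v‖]
  -- Part 1
  have part1 : ∀ k : ℕ, 1 ≤ k →
      ⟪x (k+1) - xs, P (x (k+1) - xs)⟫
          + (⟪x (k+1) - x k, P (x (k+1) - x k)⟫ - Lf * ‖x (k+1) - x k‖ ^ 2)
          + (1 / γ) * ‖lam (k+1) - ls‖ ^ 2
          + (1 / γ) * (2 * β / γ - 1) * ‖lam (k+1) - lam k‖ ^ 2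
        ≤ ⟪x k - xs, P (x k - xs)⟫ + (1 / γ) * ‖lam k - ls‖ ^ 2 := by
    intro k hk
    obtain ⟨u, hu, heq⟩ := hopt k hk
    set Astar := ContinuousLinearMap.adjoint A with hAstar
    set d := x (k+1) - xs with hd
    set e := x (k+1) - x k with hee
    set r := A (x (k+1)) - b with hr
    -- subgradient monotonicity
    have h1 : 0 ≤ ⟪u - (Astar ls - f' xs), d⟫ := by
      have ha := hu xs
      have hb := hkkt (x (k+1))
      have e1 : ⟪u, xs - x (k+1)⟫ = -⟪u, d⟫ := by
        rw [← inner_neg_right]; congr 1; rw [hd]; abel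
      have e2 : ⟪u - (Astar ls - f' xs), d⟫ = ⟪u, d⟫ - ⟪Astar ls - f' xs, d⟫ :=
        inner_sub_left _ _ _
      rw [hd] at e2 ⊢
      linarith [ha, hb, e1, e2]
    -- gradient inequality
    have h2 : -(Lf / 2) * ‖e‖ ^ 2 ≤ ⟪f' (x k) - f' xs, d⟫ := by
      have := aux_three hfconv hgrad hlip (x k) (x (k+1)) xs
      rw [hd, hee]
      exact this
    -- combination
    have h3 : -(Lf / 2) * ‖e‖ ^ 2 ≤ ⟪f' (x k) + u - Astar ls, d⟫ := by
      have e3 : ⟪f' (x k) + u - Astar ls, d⟫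
          = ⟪f' (x k) - f' xs, d⟫ + ⟪u - (Astar ls - f' xs), d⟫ := by
        rw [← inner_add_left]; congr 1; abel
      linarith
    -- use optimality equation
    have h5 : f' (x k) + u = Astar (lam k) - β • Astar r - P e := by
      rw [← sub_eq_zero, ← heq]; abel
    have heq2 : f' (x k) + u - Astar ls
        = (Astar (lam k) - Astar ls) - β • Astar r - P e := by
      rw [h5]; abel
    have h4 : -(Lf / 2) * ‖e‖ ^ 2
        ≤ ⟪lam k - ls, r⟫ - β * ⟪r, r⟫ - ⟪P e, d⟫ := by
      rw [heq2] at h3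
      have e4 : ⟪(Astar (lam k) - Astar ls) - β • Astar r - P e, d⟫
          = ⟪Astar (lam k) - Astar ls, d⟫ - β * ⟪Astar r, d⟫ - ⟪P e, d⟫ := by
        rw [inner_sub_left, inner_sub_left, real_inner_smul_left]
      have hAd : A d = r := by rw [hd, map_sub, hfeas, hr]
      have e5 : ⟪Astar (lam k) - Astar ls, d⟫ = ⟪lam k - ls, r⟫ := by
        rw [← map_sub, hAstar, ContinuousLinearMap.adjoint_inner_left, hAd]
      have e6 : ⟪Astar r, d⟫ = ⟪r, r⟫ := by
        rw [hAstar, ContinuousLinearMap.adjoint_inner_left, hAd]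
      rw [e4, e5, e6] at h3
      exact h3
    -- lambda update
    have hγr : γ • r = lam k - lam (k+1) := by
      rw [hlam k hk, hr]; abel
    have hrr : r = (1/γ) • (lam k - lam (k+1)) := by
      rw [← hγr, smul_smul, one_div, inv_mul_cancel₀ (ne_of_gt hγ0), one_smul]
    -- scalar abbreviations
    set t : ℝ := 1/γ with ht
    have e7 : ⟪lam k - ls, r⟫ = t * ⟪lam k - ls, lam k - lam (k+1)⟫ := by
      rw [hrr, real_inner_smul_right]
    have e8 : ⟪r, r⟫ = t^2 * ‖lam k - lam (k+1)‖^2 := by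
      rw [hrr, real_inner_smul_left, real_inner_smul_right, real_inner_self_eq_norm_sq]
      ring
    -- polarization for lambda
    have e9 : 2 * ⟪lam k - ls, lam k - lam (k+1)⟫
        = ‖lam k - ls‖^2 + ‖lam k - lam (k+1)‖^2 - ‖lam (k+1) - ls‖^2 := by
      have hsub : (lam k - ls) - (lam k - lam (k+1)) = lam (k+1) - ls := by abel
      have := norm_sub_sq_real (lam k - ls) (lam k - lam (k+1))
      rw [hsub] at this
      linarith
    -- P expansion
    have e10 : ⟪x k - xs, P (x k - xs)⟫
        = ⟪d, P d⟫ - 2 * ⟪P e, d⟫ + ⟪e, P e⟫ := by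
      have hde : x k - xs = d - e := by rw [hd, hee]; abel
      rw [hde, map_sub, inner_sub_left, inner_sub_right, inner_sub_right]
      have s1 : ⟪d, P e⟫ = ⟪P e, d⟫ := real_inner_comm _ _
      have s2 : ⟪e, P d⟫ = ⟪P e, d⟫ := (hPsym e d).symm
      linarith [s1, s2]
    -- norm of lambda-diff nonneg etc.
    have e11 : ‖lam (k+1) - lam k‖ = ‖lam k - lam (k+1)‖ := by
      rw [← norm_neg]; congr 1; abel
    have hγt : γ * t = 1 := by rw [ht]; field_simp
    have h2b : 2 * β / γ = 2 * β * t := by rw [ht]; ring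
    rw [e7, e8] at h4
    have e9t : 2 * t * ⟪lam k - ls, lam k - lam (k+1)⟫
        = t * ‖lam k - ls‖^2 + t * ‖lam k - lam (k+1)‖^2 - t * ‖lam (k+1) - ls‖^2 := by
      linear_combination t * e9
    clear_value t d e r
    rw [e10, e11, h2b]
    linarith [h4, e9t]
  have part2 : ∀ k : ℕ, 1 ≤ k →
      ⟪x (k+1) - xs, P (x (k+1) - xs)⟫ + (1 / γ) * ‖lam (k+1) - ls‖ ^ 2
        ≤ ⟪x k - xs, P (x k - xs)⟫ + (1 / γ) * ‖lam k - ls‖ ^ 2 := by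
    intro k hk
    have h := part1 k hk
    have h1 := hPge (x (k+1) - x k)
    have h2 : 0 ≤ (1/γ) * (2*β/γ - 1) * ‖lam (k+1) - lam k‖^2 := by
      apply mul_nonneg (mul_nonneg _ _) (sq_nonneg _)
      · positivity
      · have : 1 < 2*β/γ := (one_lt_div hγ0).mpr hγ2
        linarith
    linarith
  refine ⟨part1, part2, ?_⟩
  -- coercivity constant for P
  have hc : ∃ c : ℝ, 0 < c ∧ ∀ v : E, c * ‖v‖^2 ≤ ⟪v, P v⟫ := by
    by_cases hE : ∃ v : E, v ≠ 0
    · obtain ⟨v0, hv0⟩ := hE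
      have hmem : (‖v0‖⁻¹ • v0) ∈ Metric.sphere (0:E) 1 := by
        rw [mem_sphere_zero_iff_norm, norm_smul, norm_inv, norm_norm,
          inv_mul_cancel₀ (norm_ne_zero_iff.mpr hv0)]
      have hcont : Continuous fun v : E => ⟪v, P v⟫ :=
        continuous_id.inner P.continuous
      obtain ⟨w, hw, hmin⟩ := (isCompact_sphere (0:E) 1).exists_isMinOn
        ⟨_, hmem⟩ hcont.continuousOn
      have hw1 : ‖w‖ = 1 := mem_sphere_zero_iff_norm.mp hw
      have hwne : w ≠ 0 := by
        intro h0; rw [h0, norm_zero] at hw1; exact one_ne_zero hw1.symm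
      have hcpos : 0 < ⟪w, P w⟫ := by
        have h := hPpd w hwne
        rw [hw1] at h
        nlinarith
      refine ⟨⟪w, P w⟫, hcpos, ?_⟩
      intro v
      by_cases hv : v = 0
      · simp [hv]
      · have hnv : (0:ℝ) < ‖v‖ := norm_pos_iff.mpr hv
        have hmem2 : (‖v‖⁻¹ • v) ∈ Metric.sphere (0:E) 1 := by
          rw [mem_sphere_zero_iff_norm, norm_smul, norm_inv, norm_norm,
            inv_mul_cancel₀ (ne_of_gt hnv)]
        have hle := isMinOn_iff.mp hmin _ hmem2
        have hexp : ⟪‖v‖⁻¹ • v, P (‖v‖⁻¹ • v)⟫ = ‖v‖⁻¹ * (‖v‖⁻¹ * ⟪v, P v⟫) := by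
          rw [map_smul, real_inner_smul_left, real_inner_smul_right]
        rw [hexp] at hle
        have hid : ‖v‖^2 * (‖v‖⁻¹ * (‖v‖⁻¹ * ⟪v, P v⟫)) = ⟪v, P v⟫ := by
          generalize ⟪v, P v⟫ = X
          have hne : (‖v‖:ℝ) ≠ 0 := ne_of_gt hnv
          field_simp
        nlinarith [mul_le_mul_of_nonneg_left hle (sq_nonneg ‖v‖), hid]
    · push_neg at hE
      refine ⟨1, one_pos, ?_⟩
      intro v
      rw [hE v]
      simp
  obtain ⟨c, hcpos, hcle⟩ := hc
  -- the Lyapunov quantity is bounded by its value at k = 1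
  have hVk : ∀ k : ℕ, 1 ≤ k →
      ⟪x k - xs, P (x k - xs)⟫ + (1/γ) * ‖lam k - ls‖^2
        ≤ ⟪x 1 - xs, P (x 1 - xs)⟫ + (1/γ) * ‖lam 1 - ls‖^2 := by
    intro k hk
    induction k with
    | zero => omega
    | succ n ih =>
      rcases Nat.lt_or_ge n 1 with h | h
      · have : n + 1 = 1 := by omega
        rw [this]
      · exact le_trans (part2 n h) (ih h)
  set V1 : ℝ := ⟪x 1 - xs, P (x 1 - xs)⟫ + (1/γ) * ‖lam 1 - ls‖^2 with hV1
  clear_value V1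
  refine ⟨‖xs‖ + ‖ls‖ + Real.sqrt (V1 / c) + Real.sqrt (γ * V1), ?_⟩
  intro k hk
  have hVle := hVk k hk
  have hlamnn : 0 ≤ (1/γ) * ‖lam k - ls‖^2 := by positivity
  have hPk := hPnn (x k - xs)
  have hb1 : ‖x k - xs‖^2 ≤ V1 / c := by
    rw [le_div_iff₀ hcpos]
    have := hcle (x k - xs)
    nlinarith
  have hb1' : ‖x k - xs‖ ≤ Real.sqrt (V1 / c) := by
    have h := Real.sqrt_le_sqrt hb1
    rwa [Real.sqrt_sq (norm_nonneg _)] at h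
  have hb2 : ‖lam k - ls‖^2 ≤ γ * V1 := by
    have h1 : (1/γ) * ‖lam k - ls‖^2 ≤ V1 := by linarith
    have h2 := mul_le_mul_of_nonneg_left h1 hγ0.le
    have h3 : γ * ((1/γ) * ‖lam k - ls‖^2) = ‖lam k - ls‖^2 := by
      field_simp
    nlinarith
  have hb2' : ‖lam k - ls‖ ≤ Real.sqrt (γ * V1) := by
    have h := Real.sqrt_le_sqrt hb2
    rwa [Real.sqrt_sq (norm_nonneg _)] at h
  have hx : ‖x k‖ ≤ ‖x k - xs‖ + ‖xs‖ := by
    have h := norm_add_le (x k - xs) xs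
    rwa [sub_add_cancel] at h
  have hl : ‖lam k‖ ≤ ‖lam k - ls‖ + ‖ls‖ := by
    have h := norm_add_le (lam k - ls) ls
    rwa [sub_add_cancel] at h
  linarith
end

section
/- (Global convergence of linearized ALM with constant parameters.) Under the setting of the constant-parameter linearized ALM — β > 0, γ ∈ (0, 2β), P self-adjoint with P − L_f·I positive definite, and for each k ≥ 1 there is a subgradient uᵏ of g at x^{k+1} with ∇f(xᵏ) + uᵏ − A*λᵏ + β A*(A x^{k+1} − b) + P(x^{k+1} − xᵏ) = 0 and λ^{k+1} = λᵏ − γ(A x^{k+1} − b), where g is additionally lower semicontinuous — if some pair satisfies the KKT conditions, then the sequence (xᵏ, λᵏ) converges to a point (x^∞, λ^∞) satisfying the KKT conditions. -/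
set_option maxHeartbeats 1000000

open scoped RealInnerProductSpace
open Filter


lemma convex_grad_ineq {E : Type*} [NormedAddCommGroup E] [InnerProductSpace ℝ E]
    [CompleteSpace E]
    {f : E → ℝ} {f' : E → E} (hfconv : ConvexOn ℝ Set.univ f)
    (hgrad : ∀ x, HasGradientAt f (f' x) x) (a y : E) :
    f a + ⟪f' a, y - a⟫ ≤ f y := by
  set φ : ℝ → ℝ := fun t => f (a + t • (y - a)) with hφ
  have hline : ∀ t : ℝ, HasDerivAt (fun t : ℝ => a + t • (y - a)) (y - a) t := by
    intro t
    simpa using ((hasDerivAt_id t).smul_const (y - a)).const_add a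
  have hD : HasDerivAt φ ⟪f' a, y - a⟫ 0 := by
    have hf : HasFDerivAt f ((InnerProductSpace.toDual ℝ E) (f' a)) a :=
      (hasGradientAt_iff_hasFDerivAt).1 (hgrad a)
    have hl0 : HasDerivAt (fun t : ℝ => a + t • (y - a)) (y - a) 0 := hline 0
    have hfa : HasFDerivAt f ((InnerProductSpace.toDual ℝ E) (f' a)) (a + (0:ℝ) • (y - a)) := by
      simpa using hf
    have : HasDerivAt φ ((InnerProductSpace.toDual ℝ E) (f' a) (y - a)) 0 :=
      HasFDerivAt.comp_hasDerivAt (0:ℝ) hfa hl0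
    simpa using this
  have hslope : ∀ t ∈ Set.Ioc (0:ℝ) 1, slope φ 0 t ≤ f y - f a := by
    intro t ht
    have hc := hfconv.2 (Set.mem_univ a) (Set.mem_univ y) (by linarith [ht.2] : (0:ℝ) ≤ 1 - t)
      ht.1.le (by ring)
    have heq : (1 - t) • a + t • y = a + t • (y - a) := by
      simp [smul_sub, sub_smul]; abel
    rw [heq, smul_eq_mul, smul_eq_mul] at hc
    rw [slope_def_field, div_le_iff₀ (by linarith [ht.1] : (0:ℝ) < t - 0)]
    have h0 : φ 0 = f a := by simp [hφ]
    have h1 : φ t = f (a + t • (y - a)) := rfl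
    nlinarith [hc]
  have htend : Filter.Tendsto (slope φ 0) (nhdsWithin 0 (Set.Ioi 0)) (nhds ⟪f' a, y - a⟫) :=
    ((hasDerivAt_iff_tendsto_slope.1 hD).mono_left
      (nhdsWithin_mono _ (fun z hz => ne_of_gt hz)))
  have : ⟪f' a, y - a⟫ ≤ f y - f a := by
    refine le_of_tendsto htend ?_
    filter_upwards [Ioc_mem_nhdsGT_of_mem (Set.mem_Ico.2 ⟨le_refl 0, one_pos⟩)] with t ht
    exact hslope t ht
  linarith

lemma descent_lemma {E : Type*} [NormedAddCommGroup E] [InnerProductSpace ℝ E]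
    [CompleteSpace E]
    {f : E → ℝ} {f' : E → E} {Lf : ℝ} (hLf : 0 ≤ Lf)
    (hgrad : ∀ x, HasGradientAt f (f' x) x)
    (hlip : ∀ x x' : E, ‖f' x - f' x'‖ ≤ Lf * ‖x - x'‖) (a y : E) :
    f y ≤ f a + ⟪f' a, y - a⟫ + Lf / 2 * ‖y - a‖ ^ 2 := by
  have hf'cont : Continuous f' := by
    refine (LipschitzWith.of_dist_le_mul (K := Lf.toNNReal) (f := f') ?_).continuous
    intro u v
    rw [dist_eq_norm, dist_eq_norm]
    calc ‖f' u - f' v‖ ≤ Lf * ‖u - v‖ := hlip u v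
    _ = (Lf.toNNReal : ℝ) * ‖u - v‖ := by rw [Real.coe_toNNReal Lf hLf]
  set c : ℝ → E := fun t => a + t • (y - a) with hc
  have hccont : Continuous c := by continuity
  have hline : ∀ t : ℝ, HasDerivAt c (y - a) t := fun t => by
    simpa [hc] using ((hasDerivAt_id t).smul_const (y - a)).const_add a
  set D : ℝ → ℝ := fun t => ⟪f' (c t), y - a⟫ with hD
  have hDcont : Continuous D := (hf'cont.comp hccont).inner continuous_const
  have hderiv : ∀ t ∈ Set.uIcc (0:ℝ) 1, HasDerivAt (f ∘ c) (D t) t := by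
    intro t _
    have hfc : HasFDerivAt f ((InnerProductSpace.toDual ℝ E) (f' (c t))) (c t) :=
      (hasGradientAt_iff_hasFDerivAt).1 (hgrad (c t))
    have := HasFDerivAt.comp_hasDerivAt t hfc (hline t)
    simpa using this
  have hint : IntervalIntegrable D MeasureTheory.volume 0 1 := hDcont.intervalIntegrable 0 1
  have hFTC : ∫ t in (0:ℝ)..1, D t = (f ∘ c) 1 - (f ∘ c) 0 :=
    intervalIntegral.integral_eq_sub_of_hasDerivAt hderiv hint
  have hbound : ∀ t ∈ Set.Icc (0:ℝ) 1, D t ≤ ⟪f' a, y - a⟫ + t * (Lf * ‖y - a‖ ^ 2) := by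
    intro t ht
    have h1 : D t - ⟪f' a, y - a⟫ = ⟪f' (c t) - f' a, y - a⟫ := by
      rw [inner_sub_left]
    have h2 : ⟪f' (c t) - f' a, y - a⟫ ≤ ‖f' (c t) - f' a‖ * ‖y - a‖ :=
      real_inner_le_norm _ _
    have h3 : ‖f' (c t) - f' a‖ ≤ Lf * (t * ‖y - a‖) := by
      have := hlip (c t) a
      simpa [hc, norm_smul, abs_of_nonneg ht.1] using this
    nlinarith [norm_nonneg (y - a), norm_nonneg (f' (c t) - f' a), mul_le_mul_of_nonneg_right h3 (norm_nonneg (y - a))]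
  have hmono : ∫ t in (0:ℝ)..1, D t ≤ ∫ t in (0:ℝ)..1, (⟪f' a, y - a⟫ + t * (Lf * ‖y - a‖ ^ 2)) := by
    apply intervalIntegral.integral_mono_on zero_le_one hint
    · exact (Continuous.intervalIntegrable (by continuity) 0 1)
    · exact hbound
  have hval : ∫ t in (0:ℝ)..1, (⟪f' a, y - a⟫ + t * (Lf * ‖y - a‖ ^ 2))
      = ⟪f' a, y - a⟫ + Lf / 2 * ‖y - a‖ ^ 2 := by
    rw [intervalIntegral.integral_add (intervalIntegrable_const)
      ((intervalIntegral.intervalIntegrable_id).mul_const _)]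
    simp [intervalIntegral.integral_mul_const, integral_id]
    ring
  have h0 : (f ∘ c) 0 = f a := by simp [hc]
  have h1 : (f ∘ c) 1 = f y := by simp [hc]
  rw [hFTC, h0, h1] at hmono
  rw [hval] at hmono
  linarith

lemma exists_pd_const {E : Type*} [NormedAddCommGroup E] [InnerProductSpace ℝ E]
    [FiniteDimensional ℝ E] (P : E →L[ℝ] E) (Lf : ℝ)
    (hPpd : ∀ v : E, v ≠ 0 → Lf * ‖v‖ ^ 2 < ⟪v, P v⟫) :
    ∃ c : ℝ, 0 < c ∧ ∀ v : E, Lf * ‖v‖ ^ 2 + c * ‖v‖ ^ 2 ≤ ⟪v, P v⟫ := by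
  rcases subsingleton_or_nontrivial E with hE | hE
  · exact ⟨1, one_pos, fun v => by rw [Subsingleton.elim v 0]; simp⟩
  · have hsph : (Metric.sphere (0:E) 1).Nonempty :=
      NormedSpace.sphere_nonempty.2 zero_le_one
    have hcomp : IsCompact (Metric.sphere (0:E) 1) := isCompact_sphere 0 1
    set q : E → ℝ := fun v => ⟪v, P v⟫ - Lf * ‖v‖ ^ 2 with hq
    have hqcont : Continuous q := by
      apply Continuous.sub
      · exact (continuous_id.inner P.continuous)
      · exact continuous_const.mul ((continuous_norm).pow 2)
    obtain ⟨v0, hv0mem, hv0min'⟩ := hcomp.exists_isMinOn hsph hqcont.continuousOn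
    have hv0min : ∀ w ∈ Metric.sphere (0:E) 1, q v0 ≤ q w := fun w hw => hv0min' hw
    have hv0norm : ‖v0‖ = 1 := by simpa using hv0mem
    have hv0ne : v0 ≠ 0 := by intro h; rw [h] at hv0norm; simp at hv0norm
    refine ⟨q v0, ?_, ?_⟩
    · have := hPpd v0 hv0ne
      simp only [hq]; linarith
    · intro v
      rcases eq_or_ne v 0 with hv | hv
      · simp [hv]
      · set w : E := ‖v‖⁻¹ • v with hw
        have hvn : (0:ℝ) < ‖v‖ := norm_pos_iff.2 hv
        have hwmem : w ∈ Metric.sphere (0:E) 1 := by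
          simp [hw, norm_smul, abs_of_nonneg (inv_nonneg.2 hvn.le), inv_mul_cancel₀ hvn.ne']
        have hkey := hv0min w hwmem
        have hqw : q w = ‖v‖⁻¹ ^ 2 * q v := by
          simp only [hq, hw]
          rw [norm_smul, map_smul, inner_smul_left, real_inner_smul_right]
          simp [abs_of_nonneg (inv_nonneg.2 hvn.le)]
          ring
        have hqv : q v0 * ‖v‖ ^ 2 ≤ q v := by
          rw [hqw] at hkey
          have := mul_le_mul_of_nonneg_right hkey (sq_nonneg ‖v‖)
          have h2 : ‖v‖⁻¹ ^ 2 * q v * ‖v‖ ^ 2 = q v := by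
            field_simp
          rw [h2] at this
          exact this
        simp only [hq] at hqv ⊢
        nlinarith [hqv]

lemma key_lyapunov {E H : Type*}
    [NormedAddCommGroup E] [InnerProductSpace ℝ E] [FiniteDimensional ℝ E]
    [NormedAddCommGroup H] [InnerProductSpace ℝ H] [FiniteDimensional ℝ H]
    (A : E →L[ℝ] H) (b : H)
    (f : E → ℝ) (f' : E → E) (Lf : ℝ) (hLf : 0 ≤ Lf)
    (hfconv : ConvexOn ℝ Set.univ f)
    (hgrad : ∀ x : E, HasGradientAt f (f' x) x)
    (hlip : ∀ x x' : E, ‖f' x - f' x'‖ ≤ Lf * ‖x - x'‖)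
    (g : E → ℝ)
    (β γ : ℝ) (hγ0 : 0 < γ)
    (P : E →L[ℝ] E) (hP : IsSelfAdjoint P)
    (xk xk1 : E) (lk lk1 : H) (u : E)
    (hu : ∀ x' : E, g x' ≥ g xk1 + ⟪u, x' - xk1⟫)
    (hueq : f' xk + u - (ContinuousLinearMap.adjoint A) lk
        + β • (ContinuousLinearMap.adjoint A) (A xk1 - b)
        + P (xk1 - xk) = 0)
    (hlamk : lk1 = lk - γ • (A xk1 - b))
    (p : E) (q : H) (hfeas : A p = b)
    (hkkt : ∀ x' : E, g x' ≥ g p + ⟪(ContinuousLinearMap.adjoint A) q - f' p, x' - p⟫)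
    (hconv1 : ∀ a y : E, f a + ⟪f' a, y - a⟫ ≤ f y)
    (hdesc : ∀ a y : E, f y ≤ f a + ⟪f' a, y - a⟫ + Lf / 2 * ‖y - a‖ ^ 2) :
    ⟪xk1 - p, P (xk1 - p)⟫ + (1/γ) * ‖lk1 - q‖ ^ 2
      + (2*β - γ) * ‖A xk1 - b‖ ^ 2
      + (⟪xk1 - xk, P (xk1 - xk)⟫ - Lf * ‖xk1 - xk‖ ^ 2)
      ≤ ⟪xk - p, P (xk - p)⟫ + (1/γ) * ‖lk - q‖ ^ 2 := by
  set s : E := xk1 - xk with hs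
  set r : H := A xk1 - b with hr
  set e1 : E := xk1 - p with he1
  set e0 : E := xk - p with he0
  set d0 : H := lk - q with hd0
  have hsa : ∀ v w : E, ⟪P v, w⟫ = ⟪v, P w⟫ := fun v w => by
    conv_lhs => rw [← hP.adjoint_eq]
    exact ContinuousLinearMap.adjoint_inner_left P w v
  -- Step B: solve for u
  have hu2 : u = (ContinuousLinearMap.adjoint A) lk
      - β • (ContinuousLinearMap.adjoint A) r - P s - f' xk := by
    have h0 : u - ((ContinuousLinearMap.adjoint A) lk
        - β • (ContinuousLinearMap.adjoint A) r - P s - f' xk) = 0 := by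
      rw [← hueq]; abel
    exact sub_eq_zero.1 h0
  -- Step A
  have hA : (0:ℝ) ≤ ⟪u - ((ContinuousLinearMap.adjoint A) q - f' p), e1⟫ := by
    have h1 := hkkt xk1
    have h2 := hu p
    rw [show p - xk1 = -(xk1 - p) by abel, inner_neg_right] at h2
    rw [inner_sub_left]
    simp only [he1]
    linarith
  -- adjoint transfers
  have hadj : ∀ w : H, ⟪(ContinuousLinearMap.adjoint A) w, e1⟫ = ⟪w, r⟫ := by
    intro w
    rw [ContinuousLinearMap.adjoint_inner_left]
    congr 1
    rw [he1, map_sub, hfeas, hr]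
  -- Step C: inequality (I)
  have hI : (0:ℝ) ≤ ⟪d0, r⟫ - β * ‖r‖^2 - ⟪P s, e1⟫ - ⟪f' xk - f' p, e1⟫ := by
    have hexp : ⟪u - ((ContinuousLinearMap.adjoint A) q - f' p), e1⟫
        = ⟪d0, r⟫ - β * ‖r‖^2 - ⟪P s, e1⟫ - ⟪f' xk - f' p, e1⟫ := by
      rw [hu2]
      simp only [inner_sub_left, real_inner_smul_left, hadj, hd0, inner_sub_left]
      rw [real_inner_self_eq_norm_sq]
      ring
    linarith [hA, hexp.symm.le, hexp.le]
  -- Step D: f-term lower bound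
  have hf : ⟪f' xk - f' p, e1⟫ ≥ -(Lf/2) * ‖s‖^2 := by
    have d1 := hdesc xk xk1
    have d2 := hconv1 xk p
    have d3 := hconv1 p xk1
    have hsplit : ⟪f' xk, e1⟫ = ⟪f' xk, xk1 - xk⟫ + ⟪f' xk, xk - p⟫ := by
      rw [← inner_add_right]
      congr 1
      simp only [he1]; abel
    have hflip : ⟪f' xk, xk - p⟫ = -⟪f' xk, p - xk⟫ := by
      rw [show xk - p = -(p - xk) by abel, inner_neg_right]
    rw [inner_sub_left]
    have he1' : ⟪f' p, e1⟫ = ⟪f' p, xk1 - p⟫ := rfl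
    rw [hsplit, hflip, he1']
    simp only [hs] at *
    linarith
  -- Step E: P-term identity
  have hPid : 2 * ⟪P s, e1⟫ = ⟪e1, P e1⟫ - ⟪e0, P e0⟫ + ⟪s, P s⟫ := by
    have hse : s = e1 - e0 := by simp only [hs, he1, he0]; try abel
    have c1 : ⟪e1, P e0⟫ = ⟪P e0, e1⟫ := real_inner_comm _ _
    have c2 : ⟪e0, P e1⟫ = ⟪P e0, e1⟫ := (hsa e0 e1).symm
    have c3 : ⟪e1, P e1⟫ = ⟪P e1, e1⟫ := real_inner_comm _ _
    rw [hse]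
    simp only [map_sub, inner_sub_left, inner_sub_right]
    linarith
  -- Step F: lambda identity
  have hlid : ‖lk1 - q‖^2 = ‖d0‖^2 - 2*γ*⟪d0, r⟫ + γ^2 * ‖r‖^2 := by
    have : lk1 - q = d0 - γ • r := by rw [hlamk, hd0, hr]; abel
    rw [this, ← real_inner_self_eq_norm_sq, ← real_inner_self_eq_norm_sq,
      ← real_inner_self_eq_norm_sq]
    simp only [inner_sub_left, inner_sub_right, real_inner_smul_left, real_inner_smul_right]
    have := real_inner_comm d0 r
    ring_nf
    nlinarith [real_inner_comm d0 r]
  have hdiv : (1/γ) * ‖lk1 - q‖^2 = (1/γ) * ‖d0‖^2 - 2*⟪d0, r⟫ + γ * ‖r‖^2 := by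
    rw [hlid]; field_simp
  rw [hdiv]
  linarith [hI, hf, hPid]

open Filter in
lemma normsq_zero_tendsto {G : Type*} [NormedAddCommGroup G] (v : ℕ → G)
    (hv : Tendsto (fun n => ‖v n‖ ^ 2) atTop (nhds 0)) : Tendsto v atTop (nhds 0) := by
  rw [tendsto_zero_iff_norm_tendsto_zero]
  have := (Real.continuous_sqrt.tendsto 0).comp hv
  simp only [Function.comp_def, Real.sqrt_zero] at this
  convert this using 2 with n
  rw [Real.sqrt_sq (norm_nonneg _)]


/-- Global convergence of the linearized ALM with constant parameters: the
iterates `(xᵏ, λᵏ)` converge to a pair `(x^∞, λ^∞)` satisfying the KKT conditions. -/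
theorem stmt_7 {E H : Type*}
    [NormedAddCommGroup E] [InnerProductSpace ℝ E] [FiniteDimensional ℝ E]
    [NormedAddCommGroup H] [InnerProductSpace ℝ H] [FiniteDimensional ℝ H]
    (A : E →L[ℝ] H) (b : H)
    (f : E → ℝ) (f' : E → E) (Lf : ℝ) (hLf : 0 ≤ Lf)
    (hfconv : ConvexOn ℝ Set.univ f)
    (hgrad : ∀ x : E, HasGradientAt f (f' x) x)
    (hlip : ∀ x x' : E, ‖f' x - f' x'‖ ≤ Lf * ‖x - x'‖)
    (g : E → ℝ) (hgconv : ConvexOn ℝ Set.univ g) (hglsc : LowerSemicontinuous g)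
    (β γ : ℝ) (hβ : 0 < β) (hγ0 : 0 < γ) (hγ2 : γ < 2 * β)
    (P : E →L[ℝ] E) (hP : IsSelfAdjoint P)
    (hPpd : ∀ v : E, v ≠ 0 → Lf * ‖v‖ ^ 2 < ⟪v, P v⟫)
    (x : ℕ → E) (lam : ℕ → H)
    (hopt : ∀ k : ℕ, 1 ≤ k → ∃ u : E,
      (∀ x' : E, g x' ≥ g (x (k+1)) + ⟪u, x' - x (k+1)⟫) ∧
      f' (x k) + u - (ContinuousLinearMap.adjoint A) (lam k)
        + β • (ContinuousLinearMap.adjoint A) (A (x (k+1)) - b)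
        + P (x (k+1) - x k) = 0)
    (hlam : ∀ k : ℕ, 1 ≤ k → lam (k+1) = lam k - γ • (A (x (k+1)) - b))
    (xs : E) (ls : H)
    (hfeas : A xs = b)
    (hkkt : ∀ x' : E, g x' ≥ g xs + ⟪(ContinuousLinearMap.adjoint A) ls - f' xs, x' - xs⟫) :
    ∃ (xi : E) (li : H),
      A xi = b ∧
      (∀ x' : E, g x' ≥ g xi + ⟪(ContinuousLinearMap.adjoint A) li - f' xi, x' - xi⟫) ∧
      Filter.Tendsto (fun k : ℕ => (x k, lam k)) Filter.atTop (nhds (xi, li)) := by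
  have hconv1 : ∀ a y : E, f a + ⟪f' a, y - a⟫ ≤ f y := convex_grad_ineq hfconv hgrad
  have hdesc : ∀ a y : E, f y ≤ f a + ⟪f' a, y - a⟫ + Lf / 2 * ‖y - a‖ ^ 2 :=
    descent_lemma hLf hgrad hlip
  obtain ⟨c, hc, hcineq⟩ := exists_pd_const P Lf hPpd
  have hf'cont : Continuous f' := by
    refine (LipschitzWith.of_dist_le_mul (K := Lf.toNNReal) (f := f') ?_).continuous
    intro u v
    rw [dist_eq_norm, dist_eq_norm]
    calc ‖f' u - f' v‖ ≤ Lf * ‖u - v‖ := hlip u v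
    _ = (Lf.toNNReal : ℝ) * ‖u - v‖ := by rw [Real.coe_toNNReal Lf hLf]
  -- nonnegativity of quadratic forms
  have hQpos : ∀ v : E, 0 ≤ ⟪v, P v⟫ := by
    intro v
    have := hcineq v
    nlinarith [sq_nonneg ‖v‖, mul_nonneg hLf (sq_nonneg ‖v‖), mul_nonneg hc.le (sq_nonneg ‖v‖)]
  have hQc : ∀ v : E, c * ‖v‖^2 ≤ ⟪v, P v⟫ := by
    intro v
    have := hcineq v
    nlinarith [mul_nonneg hLf (sq_nonneg ‖v‖)]
  -- the main one-step Lyapunov inequality, for an arbitrary KKT pair (p, q)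
  have main : ∀ (p : E) (q : H), A p = b →
      (∀ x' : E, g x' ≥ g p + ⟪(ContinuousLinearMap.adjoint A) q - f' p, x' - p⟫) →
      ∀ k : ℕ, 1 ≤ k →
      ⟪x (k+1) - p, P (x (k+1) - p)⟫ + (1/γ) * ‖lam (k+1) - q‖ ^ 2
        + (2*β - γ) * ‖A (x (k+1)) - b‖ ^ 2 + c * ‖x (k+1) - x k‖ ^ 2
      ≤ ⟪x k - p, P (x k - p)⟫ + (1/γ) * ‖lam k - q‖ ^ 2 := by
    intro p q hfp hkp k hk
    obtain ⟨u, hu, hueq⟩ := hopt k hk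
    have hkey := key_lyapunov A b f f' Lf hLf hfconv hgrad hlip g β γ hγ0 P hP
      (x k) (x (k+1)) (lam k) (lam (k+1)) u hu hueq (hlam k hk) p q hfp hkp hconv1 hdesc
    have hcs := hcineq (x (k+1) - x k)
    linarith
  have hVpos : ∀ (p : E) (q : H) (k : ℕ),
      0 ≤ ⟪x k - p, P (x k - p)⟫ + (1/γ) * ‖lam k - q‖ ^ 2 := by
    intro p q k
    have h1 := hQpos (x k - p)
    have h2 : 0 ≤ (1/γ) * ‖lam k - q‖ ^ 2 :=
      mul_nonneg (by positivity) (sq_nonneg _)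
    linarith
  -- Lyapunov sequence w.r.t. (xs, ls), shifted by one
  set W : ℕ → ℝ := fun n => ⟪x (n+1) - xs, P (x (n+1) - xs)⟫ + (1/γ) * ‖lam (n+1) - ls‖ ^ 2
    with hW
  have hWanti : Antitone W := by
    apply antitone_nat_of_succ_le
    intro n
    have h := main xs ls hfeas hkkt (n+1) (by omega)
    have h1 : 0 ≤ (2*β - γ) * ‖A (x (n+2)) - b‖ ^ 2 :=
      mul_nonneg (by linarith) (sq_nonneg _)
    have h2 : 0 ≤ c * ‖x (n+2) - x (n+1)‖ ^ 2 := mul_nonneg hc.le (sq_nonneg _)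
    simp only [hW]
    linarith
  have hWpos : ∀ n, 0 ≤ W n := fun n => hVpos xs ls (n+1)
  -- convergence of W, hence residuals go to zero
  have hWtend : Tendsto W atTop (nhds (⨅ n, W n)) :=
    tendsto_atTop_ciInf hWanti ⟨0, fun y hy => by obtain ⟨n, rfl⟩ := hy; exact hWpos n⟩
  have hWdiff : Tendsto (fun n => W n - W (n+1)) atTop (nhds 0) := by
    have h2 : Tendsto (fun n => W (n+1)) atTop (nhds (⨅ n, W n)) :=
      hWtend.comp (tendsto_add_atTop_nat 1)
    simpa using hWtend.sub h2
  have hresid : Tendsto (fun n => (2*β - γ) * ‖A (x (n+2)) - b‖ ^ 2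
      + c * ‖x (n+2) - x (n+1)‖ ^ 2) atTop (nhds 0) := by
    apply squeeze_zero (g := fun n => W n - W (n+1))
    · intro n
      have h1 : 0 ≤ (2*β - γ) * ‖A (x (n+2)) - b‖ ^ 2 := mul_nonneg (by linarith) (sq_nonneg _)
      have h2 : 0 ≤ c * ‖x (n+2) - x (n+1)‖ ^ 2 := mul_nonneg hc.le (sq_nonneg _)
      linarith
    · intro n
      have h := main xs ls hfeas hkkt (n+1) (by omega)
      simp only [hW]
      linarith
    · exact hWdiff
  have hr0 : Tendsto (fun n => A (x (n+2)) - b) atTop (nhds 0) := by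
    refine normsq_zero_tendsto _ ?_
    have : Tendsto (fun n => (2*β - γ) * ‖A (x (n+2)) - b‖ ^ 2) atTop (nhds 0) := by
      apply squeeze_zero (g := fun n => (2*β - γ) * ‖A (x (n+2)) - b‖ ^ 2
        + c * ‖x (n+2) - x (n+1)‖ ^ 2)
      · intro n; exact mul_nonneg (by linarith) (sq_nonneg _)
      · intro n; nlinarith [mul_nonneg hc.le (sq_nonneg ‖x (n+2) - x (n+1)‖)]
      · exact hresid
    have hδ : 2*β - γ ≠ 0 := by linarith
    have h2 := this.const_mul (1/(2*β - γ))
    simp only [mul_zero] at h2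
    exact h2.congr (fun n => by field_simp)
  have hs0 : Tendsto (fun n => x (n+2) - x (n+1)) atTop (nhds 0) := by
    refine normsq_zero_tendsto _ ?_
    have : Tendsto (fun n => c * ‖x (n+2) - x (n+1)‖ ^ 2) atTop (nhds 0) := by
      apply squeeze_zero (g := fun n => (2*β - γ) * ‖A (x (n+2)) - b‖ ^ 2
        + c * ‖x (n+2) - x (n+1)‖ ^ 2)
      · intro n; exact mul_nonneg hc.le (sq_nonneg _)
      · intro n; nlinarith [mul_nonneg (by linarith : (0:ℝ) ≤ 2*β - γ) (sq_nonneg ‖A (x (n+2)) - b‖)]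
      · exact hresid
    have h2 := this.const_mul (1/c)
    simp only [mul_zero] at h2
    exact h2.congr (fun n => by field_simp)
  -- boundedness of the iterates
  have hWle : ∀ n, W n ≤ W 0 := fun n => hWanti (Nat.zero_le n)
  have hbdd : ∀ n : ℕ, (x (n+1), lam (n+1)) ∈
      Metric.closedBall ((xs, ls) : E × H) (Real.sqrt (W 0 / c) + Real.sqrt (γ * W 0)) := by
    intro n
    have hWn := hWle n
    have hx : ‖x (n+1) - xs‖ ≤ Real.sqrt (W 0 / c) := by
      have h1 : c * ‖x (n+1) - xs‖^2 ≤ W 0 := by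
        have := hQc (x (n+1) - xs)
        have h2 : 0 ≤ (1/γ) * ‖lam (n+1) - ls‖ ^ 2 := mul_nonneg (by positivity) (sq_nonneg _)
        simp only [hW] at hWn ⊢
        linarith
      have h3 : ‖x (n+1) - xs‖^2 ≤ W 0 / c := by
        rw [le_div_iff₀ hc]
        linarith
      calc ‖x (n+1) - xs‖ = Real.sqrt (‖x (n+1) - xs‖^2) := (Real.sqrt_sq (norm_nonneg _)).symm
      _ ≤ Real.sqrt (W 0 / c) := Real.sqrt_le_sqrt h3
    have hl : ‖lam (n+1) - ls‖ ≤ Real.sqrt (γ * W 0) := by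
      have h1 : ‖lam (n+1) - ls‖^2 ≤ γ * W 0 := by
        have h2 : 0 ≤ ⟪x (n+1) - xs, P (x (n+1) - xs)⟫ := hQpos _
        have h4 : (1/γ) * ‖lam (n+1) - ls‖ ^ 2 ≤ W 0 := by
          simp only [hW] at hWn ⊢; linarith
        have h5 := mul_le_mul_of_nonneg_left h4 hγ0.le
        calc ‖lam (n+1) - ls‖^2 = γ * ((1/γ) * ‖lam (n+1) - ls‖ ^ 2) := by field_simp
        _ ≤ γ * W 0 := h5
      calc ‖lam (n+1) - ls‖ = Real.sqrt (‖lam (n+1) - ls‖^2) := (Real.sqrt_sq (norm_nonneg _)).symm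
      _ ≤ Real.sqrt (γ * W 0) := Real.sqrt_le_sqrt h1
    rw [Metric.mem_closedBall, Prod.dist_eq]
    have hx' : dist (x (n+1)) xs ≤ Real.sqrt (W 0 / c) := by rwa [dist_eq_norm]
    have hl' : dist (lam (n+1)) ls ≤ Real.sqrt (γ * W 0) := by rwa [dist_eq_norm]
    have hs1 : (0:ℝ) ≤ Real.sqrt (W 0 / c) := Real.sqrt_nonneg _
    have hs2 : (0:ℝ) ≤ Real.sqrt (γ * W 0) := Real.sqrt_nonneg _
    apply max_le <;> linarith
  -- extract convergent subsequence
  obtain ⟨z, _, φ, hφ, hz⟩ := tendsto_subseq_of_bounded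
    (Metric.isBounded_closedBall (x := ((xs, ls) : E × H))
      (r := Real.sqrt (W 0 / c) + Real.sqrt (γ * W 0))) hbdd
  obtain ⟨xi, li⟩ := z
  have hxsub : Tendsto (fun j => x (φ j + 1)) atTop (nhds xi) :=
    (continuous_fst.tendsto _).comp hz
  have hlsub : Tendsto (fun j => lam (φ j + 1)) atTop (nhds li) :=
    (continuous_snd.tendsto _).comp hz
  have hφtop : Tendsto φ atTop atTop := hφ.tendsto_atTop
  have hx2sub : Tendsto (fun j => x (φ j + 2)) atTop (nhds xi) := by
    have hd : Tendsto (fun j => x (φ j + 2) - x (φ j + 1)) atTop (nhds 0) :=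
      hs0.comp hφtop
    have := hd.add hxsub
    simpa using this
  have hr2sub : Tendsto (fun j => A (x (φ j + 2)) - b) atTop (nhds 0) := hr0.comp hφtop
  -- feasibility of the limit
  have hfeas_xi : A xi = b := by
    have h1 : Tendsto (fun j => A (x (φ j + 2)) - b) atTop (nhds (A xi - b)) :=
      ((A.continuous.tendsto xi).comp hx2sub).sub tendsto_const_nhds
    have := tendsto_nhds_unique h1 hr2sub
    have h2 : A xi - b = 0 := this
    rw [sub_eq_zero] at h2
    exact h2
  -- the explicit subgradient and its limit
  have hUsub : ∀ k : ℕ, 1 ≤ k → ∀ x' : E, g x' ≥ g (x (k+1)) +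
      ⟪(ContinuousLinearMap.adjoint A) (lam k)
        - β • (ContinuousLinearMap.adjoint A) (A (x (k+1)) - b)
        - P (x (k+1) - x k) - f' (x k), x' - x (k+1)⟫ := by
    intro k hk x'
    obtain ⟨u, hu, hueq⟩ := hopt k hk
    have hu2 : u = (ContinuousLinearMap.adjoint A) (lam k)
        - β • (ContinuousLinearMap.adjoint A) (A (x (k+1)) - b)
        - P (x (k+1) - x k) - f' (x k) := by
      have h0 : u - ((ContinuousLinearMap.adjoint A) (lam k)
          - β • (ContinuousLinearMap.adjoint A) (A (x (k+1)) - b)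
          - P (x (k+1) - x k) - f' (x k)) = 0 := by
        rw [← hueq]; abel
      exact sub_eq_zero.1 h0
    rw [← hu2]
    exact hu x'
  -- limit of the subgradients
  have hUlim : Tendsto (fun j => (ContinuousLinearMap.adjoint A) (lam (φ j + 1))
      - β • (ContinuousLinearMap.adjoint A) (A (x (φ j + 2)) - b)
      - P (x (φ j + 2) - x (φ j + 1)) - f' (x (φ j + 1))) atTop
      (nhds ((ContinuousLinearMap.adjoint A) li - f' xi)) := by
    have h1 : Tendsto (fun j => (ContinuousLinearMap.adjoint A) (lam (φ j + 1))) atTop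
        (nhds ((ContinuousLinearMap.adjoint A) li)) :=
      ((ContinuousLinearMap.adjoint A).continuous.tendsto li).comp hlsub
    have h2 : Tendsto (fun j => β • (ContinuousLinearMap.adjoint A) (A (x (φ j + 2)) - b))
        atTop (nhds 0) := by
      have := ((ContinuousLinearMap.adjoint A).continuous.tendsto 0).comp hr2sub
      simp only [Function.comp_def, map_zero] at this
      have h3 := this.const_smul β
      simpa using h3
    have h3 : Tendsto (fun j => P (x (φ j + 2) - x (φ j + 1))) atTop (nhds 0) := by
      have := (P.continuous.tendsto 0).comp (hs0.comp hφtop)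
      simpa [Function.comp_def] using this
    have h4 : Tendsto (fun j => f' (x (φ j + 1))) atTop (nhds (f' xi)) :=
      (hf'cont.tendsto xi).comp hxsub
    have := ((h1.sub h2).sub h3).sub h4
    simpa using this
  -- KKT subgradient condition in the limit
  have hkkt_xi : ∀ x' : E, g x' ≥ g xi + ⟪(ContinuousLinearMap.adjoint A) li - f' xi, x' - xi⟫ := by
    intro x'
    set t : ℝ := ⟪(ContinuousLinearMap.adjoint A) li - f' xi, x' - xi⟫ with ht
    have htlim : Tendsto (fun j => ⟪(ContinuousLinearMap.adjoint A) (lam (φ j + 1))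
        - β • (ContinuousLinearMap.adjoint A) (A (x (φ j + 2)) - b)
        - P (x (φ j + 2) - x (φ j + 1)) - f' (x (φ j + 1)), x' - x (φ j + 2)⟫) atTop
        (nhds t) := by
      exact hUlim.inner (tendsto_const_nhds.sub hx2sub)
    have hge : ∀ j : ℕ, g (x (φ j + 2)) ≤ g x'
        - ⟪(ContinuousLinearMap.adjoint A) (lam (φ j + 1))
        - β • (ContinuousLinearMap.adjoint A) (A (x (φ j + 2)) - b)
        - P (x (φ j + 2) - x (φ j + 1)) - f' (x (φ j + 1)), x' - x (φ j + 2)⟫ := by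
      intro j
      have hk1 : 1 ≤ φ j + 1 := by omega
      have := hUsub (φ j + 1) hk1 x'
      linarith [this]
    have key : g xi ≤ g x' - t := by
      by_contra hcon
      push_neg at hcon
      obtain ⟨y, hy1, hy2⟩ := exists_between hcon
      suffices hsuff : y ≤ g x' - t by linarith
      have hy : y < g xi := hy2
      have hev : ∀ᶠ j in atTop, y < g (x (φ j + 2)) := by
        have := hglsc xi y hy
        exact hx2sub.eventually this
      have hle : ∀ᶠ j in atTop, y ≤ g x'
          - ⟪(ContinuousLinearMap.adjoint A) (lam (φ j + 1))
          - β • (ContinuousLinearMap.adjoint A) (A (x (φ j + 2)) - b)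
          - P (x (φ j + 2) - x (φ j + 1)) - f' (x (φ j + 1)), x' - x (φ j + 2)⟫ := by
        filter_upwards [hev] with j hj
        linarith [hge j]
      exact ge_of_tendsto (tendsto_const_nhds.sub htlim) hle
    linarith
  -- Lyapunov sequence w.r.t. the limit point
  set W2 : ℕ → ℝ := fun n => ⟪x (n+1) - xi, P (x (n+1) - xi)⟫ + (1/γ) * ‖lam (n+1) - li‖ ^ 2
    with hW2
  have hW2anti : Antitone W2 := by
    apply antitone_nat_of_succ_le
    intro n
    have h := main xi li hfeas_xi hkkt_xi (n+1) (by omega)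
    have h1 : 0 ≤ (2*β - γ) * ‖A (x (n+2)) - b‖ ^ 2 := mul_nonneg (by linarith) (sq_nonneg _)
    have h2 : 0 ≤ c * ‖x (n+2) - x (n+1)‖ ^ 2 := mul_nonneg hc.le (sq_nonneg _)
    simp only [hW2]
    linarith
  have hW2pos : ∀ n, 0 ≤ W2 n := fun n => hVpos xi li (n+1)
  have hW2tend : Tendsto W2 atTop (nhds (⨅ n, W2 n)) :=
    tendsto_atTop_ciInf hW2anti ⟨0, fun y hy => by obtain ⟨n, rfl⟩ := hy; exact hW2pos n⟩
  have hW2sub0 : Tendsto (fun j => W2 (φ j)) atTop (nhds 0) := by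
    have hxd : Tendsto (fun j => x (φ j + 1) - xi) atTop (nhds 0) := by
      have := hxsub.sub (tendsto_const_nhds (x := xi))
      simpa using this
    have hld : Tendsto (fun j => lam (φ j + 1) - li) atTop (nhds 0) := by
      have := hlsub.sub (tendsto_const_nhds (x := li))
      simpa using this
    have h1 : Tendsto (fun j => ⟪x (φ j + 1) - xi, P (x (φ j + 1) - xi)⟫) atTop (nhds 0) := by
      have : Tendsto (fun j => ⟪x (φ j + 1) - xi, P (x (φ j + 1) - xi)⟫) atTop (nhds ⟪(0:E), P 0⟫) :=
        hxd.inner ((P.continuous.tendsto 0).comp hxd)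
      simpa using this
    have h2 : Tendsto (fun j => (1/γ) * ‖lam (φ j + 1) - li‖ ^ 2) atTop (nhds 0) := by
      have hn : Tendsto (fun j => ‖lam (φ j + 1) - li‖) atTop (nhds 0) :=
        tendsto_zero_iff_norm_tendsto_zero.1 hld
      have := ((hn.pow 2).const_mul (1/γ))
      simpa using this
    simpa only [add_zero] using h1.add h2
  have hinf0 : (⨅ n, W2 n) = 0 := by
    have h1 : Tendsto (fun j => W2 (φ j)) atTop (nhds (⨅ n, W2 n)) := hW2tend.comp hφtop
    exact tendsto_nhds_unique h1 hW2sub0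
  have hW2zero : Tendsto W2 atTop (nhds 0) := hinf0 ▸ hW2tend
  -- deduce convergence of x and lam
  have hxlim : Tendsto (fun n => x (n+1)) atTop (nhds xi) := by
    have h1 : Tendsto (fun n => x (n+1) - xi) atTop (nhds 0) := by
      refine normsq_zero_tendsto _ ?_
      apply squeeze_zero (g := fun n => W2 n / c)
      · intro n; exact sq_nonneg _
      · intro n
        have hq := hQc (x (n+1) - xi)
        have h2 : 0 ≤ (1/γ) * ‖lam (n+1) - li‖ ^ 2 := mul_nonneg (by positivity) (sq_nonneg _)
        rw [le_div_iff₀ hc]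
        simp only [hW2]
        nlinarith
      · have := hW2zero.const_mul (1/c)
        simpa [div_eq_mul_inv, mul_comm, one_div] using this.congr (fun n => by ring)
    have := h1.add (tendsto_const_nhds (x := xi))
    simpa using this
  have hllim : Tendsto (fun n => lam (n+1)) atTop (nhds li) := by
    have h1 : Tendsto (fun n => lam (n+1) - li) atTop (nhds 0) := by
      refine normsq_zero_tendsto _ ?_
      apply squeeze_zero (g := fun n => γ * W2 n)
      · intro n; exact sq_nonneg _
      · intro n
        have h2 : 0 ≤ ⟪x (n+1) - xi, P (x (n+1) - xi)⟫ := hQpos _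
        have h4 : (1/γ) * ‖lam (n+1) - li‖ ^ 2 ≤ W2 n := by
          simp only [hW2]; linarith
        have h5 := mul_le_mul_of_nonneg_left h4 hγ0.le
        have h3 : ‖lam (n+1) - li‖ ^ 2 = γ * ((1/γ) * ‖lam (n+1) - li‖ ^ 2) := by field_simp
        calc ‖lam (n+1) - li‖ ^ 2 = γ * ((1/γ) * ‖lam (n+1) - li‖ ^ 2) := h3
        _ ≤ γ * W2 n := h5
      · simpa only [mul_zero] using hW2zero.const_mul γ
    have := h1.add (tendsto_const_nhds (x := li))
    simpa using this
  refine ⟨xi, li, hfeas_xi, hkkt_xi, ?_⟩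
  rw [← tendsto_add_atTop_iff_nat 1]
  exact hxlim.prodMk_nhds hllim
end

section
/- (O(1/t) ergodic rate of linearized ADMM with constant parameters.) Let γ > 0, let P be self-adjoint positive semidefinite on Y, and let Q be self-adjoint on Z with Q − L_h·I positive semidefinite. Let (yᵏ, zᵏ, λᵏ)_{k≥1} satisfy λ¹ = 0 and, for each k ≥ 1: there is a subgradient u of f at y^{k+1} with u − B*λᵏ + γ B*(B y^{k+1} + C zᵏ − b) + P(y^{k+1} − yᵏ) = 0; there is a subgradient v of g at z^{k+1} with v + ∇h(zᵏ) − C*λᵏ + γ C*(B y^{k+1} + C z^{k+1} − b) + Q(z^{k+1} − zᵏ) = 0; and λ^{k+1} = λᵏ − γ(B y^{k+1} + C z^{k+1} − b). Let (y*, z*, λ*) satisfy the KKT conditions with λ* ≠ 0, and set ỹ^{t+1} = (1/t)∑_{k=1}^t y^{k+1}, z̃^{t+1} = (1/t)∑_{k=1}^t z^{k+1}. Then |F(ỹ^{t+1}, z̃^{t+1}) − F(y*, z*)| ≤ (1/(2t))·(4‖λ*‖²/γ + ‖y¹ − y*‖²_P + ‖z¹ − z*‖²_{Q + γ C*C}) and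 ‖B ỹ^{t+1} + C z̃^{t+1} − b‖ ≤ (1/(2t‖λ*‖))·(4‖λ*‖²/γ + ‖y¹ − y*‖²_P + ‖z¹ − z*‖²_{Q + γ C*C}). -/
open scoped RealInnerProductSpace
open Set Topology Filter

section Helpers
variable {E : Type*} [NormedAddCommGroup E] [InnerProductSpace ℝ E] [CompleteSpace E]

lemma sa_expand (M : E →L[ℝ] E) (hM : IsSelfAdjoint M) (u v : E) :
    2 * ⟪M u, v⟫ = ⟪v, M v⟫ + ⟪u, M u⟫ - ⟪v - u, M (v - u)⟫ := by
  have key : ∀ a c : E, ⟪M a, c⟫ = ⟪a, M c⟫ :=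
    ContinuousLinearMap.isSelfAdjoint_iff_isSymmetric.mp hM
  simp only [map_sub, inner_sub_left, inner_sub_right]
  have h1 : ⟪v, M u⟫ = ⟪M u, v⟫ := real_inner_comm _ _
  have h2 : ⟪u, M v⟫ = ⟪M u, v⟫ := by rw [← key, real_inner_comm]
  linarith

omit [CompleteSpace E] in
lemma inner_half_expand (x y : E) :
    ⟪x, y - x⟫ = (‖y‖ ^ 2 - ‖x‖ ^ 2 - ‖y - x‖ ^ 2) / 2 := by
  rw [norm_sub_sq_real, inner_sub_right, real_inner_self_eq_norm_sq, real_inner_comm]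
  ring

lemma comp_line_hasDerivAt' {h : E → ℝ} {h' : E → E}
    (hgrad : ∀ z : E, HasGradientAt h (h' z) z) (x d : E) (t : ℝ) :
    HasDerivAt (fun s : ℝ => h (x + s • d)) ⟪h' (x + t • d), d⟫ t := by
  have h1 : HasFDerivAt h ((InnerProductSpace.toDual ℝ E) (h' (x + t • d))) (x + t • d) :=
    (hasGradientAt_iff_hasFDerivAt.mp (hgrad _))
  have h2 : HasDerivAt (fun s : ℝ => x + s • d) d t := by
    simpa using ((hasDerivAt_id t).smul_const d).const_add x
  have h3 := h1.comp_hasDerivAt t h2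
  simp only [InnerProductSpace.toDual_apply_apply] at h3
  exact h3

lemma descent_lemma_s11 {h : E → ℝ} {h' : E → E} {L : ℝ} (hL : 0 ≤ L)
    (hgrad : ∀ z : E, HasGradientAt h (h' z) z)
    (hlip : ∀ z z' : E, ‖h' z - h' z'‖ ≤ L * ‖z - z'‖) (x w : E) :
    h w ≤ h x + ⟪h' x, w - x⟫ + L / 2 * ‖w - x‖ ^ 2 := by
  set d := w - x with hd
  have hcont : Continuous h' := by
    have : LipschitzWith (Real.toNNReal L) h' := by
      apply LipschitzWith.of_dist_le_mul
      intro a c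
      rw [dist_eq_norm, dist_eq_norm, Real.coe_toNNReal L hL]
      exact hlip a c
    exact this.continuous
  have hcline : Continuous fun s : ℝ => ⟪h' (x + s • d), d⟫ := by
    exact (Continuous.inner (hcont.comp (continuous_const.add
      (continuous_id.smul continuous_const))) continuous_const)
  have hFTC' : ∫ s in (0:ℝ)..1, ⟪h' (x + s • d), d⟫ = h w - h x := by
    have := intervalIntegral.integral_eq_sub_of_hasDerivAt
      (f := fun s : ℝ => h (x + s • d)) (f' := fun s : ℝ => ⟪h' (x + s • d), d⟫)
      (a := 0) (b := 1)
      (fun t _ => comp_line_hasDerivAt' hgrad x d t) (hcline.intervalIntegrable 0 1)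
    rw [this]; simp [hd]
  have hgc : Continuous (fun s : ℝ => ⟪h' x, d⟫ + L * ‖d‖ ^ 2 * s) := by fun_prop
  have hmono : ∫ s in (0:ℝ)..1, ⟪h' (x + s • d), d⟫
      ≤ ∫ s in (0:ℝ)..1, (⟪h' x, d⟫ + L * ‖d‖ ^ 2 * s) := by
    apply intervalIntegral.integral_mono_on zero_le_one
      (hcline.intervalIntegrable 0 1) (hgc.intervalIntegrable 0 1)
    intro s hs
    have h1 : ⟪h' (x + s • d), d⟫ - ⟪h' x, d⟫ = ⟪h' (x + s • d) - h' x, d⟫ := by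
      rw [inner_sub_left]
    have h2 : ⟪h' (x + s • d) - h' x, d⟫ ≤ ‖h' (x + s • d) - h' x‖ * ‖d‖ :=
      real_inner_le_norm _ _
    have h3 : ‖h' (x + s • d) - h' x‖ ≤ L * (s * ‖d‖) := by
      have := hlip (x + s • d) x
      simp only [add_sub_cancel_left] at this
      rwa [norm_smul, Real.norm_eq_abs, abs_of_nonneg hs.1] at this
    have h4 := mul_le_mul_of_nonneg_right h3 (norm_nonneg d)
    nlinarith [norm_nonneg d]
  have hint : ∫ s in (0:ℝ)..1, (⟪h' x, d⟫ + L * ‖d‖ ^ 2 * s)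
      = ⟪h' x, d⟫ + L / 2 * ‖d‖ ^ 2 := by
    rw [intervalIntegral.integral_add intervalIntegrable_const
      (Continuous.intervalIntegrable (by fun_prop) 0 1),
      intervalIntegral.integral_const_mul, integral_id]
    simp; ring
  rw [hFTC', hint] at hmono
  linarith

lemma conv_grad {h : E → ℝ} {h' : E → E} (hh : ConvexOn ℝ Set.univ h)
    (hgrad : ∀ z : E, HasGradientAt h (h' z) z) (x w : E) :
    h x + ⟪h' x, w - x⟫ ≤ h w := by
  set d := w - x with hd
  have hψ : HasDerivAt (fun s : ℝ => h (x + s • d)) ⟪h' x, d⟫ 0 := by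
    simpa using comp_line_hasDerivAt' hgrad x d 0
  have htend : Filter.Tendsto (slope (fun s : ℝ => h (x + s • d)) 0) (𝓝[>] (0:ℝ))
      (𝓝 ⟪h' x, d⟫) :=
    (hasDerivAt_iff_tendsto_slope.mp hψ).mono_left
      (nhdsWithin_mono _ (fun s hs => ne_of_gt hs))
  have hbound : ∀ᶠ s in 𝓝[>] (0:ℝ),
      slope (fun s : ℝ => h (x + s • d)) 0 s ≤ h w - h x := by
    filter_upwards [Ioc_mem_nhdsGT_of_mem (Set.mem_Ico.mpr ⟨le_refl (0:ℝ), one_pos⟩)]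
      with s hs
    obtain ⟨hs0, hs1⟩ := hs
    have hconv := hh.2 (Set.mem_univ x) (Set.mem_univ w)
      (by linarith : (0:ℝ) ≤ 1 - s) (le_of_lt hs0) (by ring)
    have hxw : (1 - s) • x + s • w = x + s • d := by
      rw [hd]; module
    rw [hxw] at hconv
    rw [slope_def_field]
    simp only [smul_zero, add_zero, smul_eq_mul] at *
    rw [show s - 0 = s by ring, show x + (0:ℝ) • d = x by simp, div_le_iff₀ hs0]
    nlinarith
  have := le_of_tendsto htend hbound
  linarith


end Helpers
section Key
variable {Y Z H : Type*}
    [NormedAddCommGroup Y] [InnerProductSpace ℝ Y] [FiniteDimensional ℝ Y]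
    [NormedAddCommGroup Z] [InnerProductSpace ℝ Z] [FiniteDimensional ℝ Z]
    [NormedAddCommGroup H] [InnerProductSpace ℝ H] [FiniteDimensional ℝ H]

set_option maxHeartbeats 2000000 in
/-- Per-iteration inequality for linearized ADMM. -/
lemma admm_key (B : Y →L[ℝ] H) (C : Z →L[ℝ] H) (b : H)
    (f : Y → ℝ) (g : Z → ℝ) (h : Z → ℝ) (h' : Z → Z) (Lh : ℝ)
    (γ : ℝ) (hγ : 0 < γ)
    (P : Y →L[ℝ] Y) (hP : IsSelfAdjoint P) (hPpsd : ∀ v : Y, 0 ≤ ⟪v, P v⟫)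
    (Q : Z →L[ℝ] Z) (hQ : IsSelfAdjoint Q) (hQpsd : ∀ v : Z, Lh * ‖v‖ ^ 2 ≤ ⟪v, Q v⟫)
    (a a0 : Y) (c c0 : Z) (l l' μ : H) (ys : Y) (zs : Z)
    (hfeas : B ys + C zs = b)
    (hl : l' = l - γ • (B a + C c - b))
    (u : Z → ℝ) -- dummy to avoid clash
    (uu : Y)
    (hu1 : ∀ y' : Y, f y' ≥ f a + ⟪uu, y' - a⟫)
    (hu2 : uu - (ContinuousLinearMap.adjoint B) l
        + γ • (ContinuousLinearMap.adjoint B) (B a + C c0 - b) + P (a - a0) = 0)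
    (vv : Z)
    (hv1 : ∀ z' : Z, g z' ≥ g c + ⟪vv, z' - c⟫)
    (hv2 : vv + h' c0 - (ContinuousLinearMap.adjoint C) l
        + γ • (ContinuousLinearMap.adjoint C) (B a + C c - b) + Q (c - c0) = 0)
    (hdesc : h c ≤ h c0 + ⟪h' c0, c - c0⟫ + Lh / 2 * ‖c - c0‖ ^ 2)
    (hcg : h c0 + ⟪h' c0, zs - c0⟫ ≤ h zs) :
    (f a + g c + h c) - (f ys + g zs + h zs) + ⟪μ, B a + C c - b⟫
      ≤ (1/(2*γ) * ‖l + μ‖^2 + 1/2 * ⟪a0 - ys, P (a0 - ys)⟫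
          + 1/2 * ⟪c0 - zs, Q (c0 - zs)⟫ + γ/2 * ‖C (c0 - zs)‖^2)
        - (1/(2*γ) * ‖l' + μ‖^2 + 1/2 * ⟪a - ys, P (a - ys)⟫
          + 1/2 * ⟪c - zs, Q (c - zs)⟫ + γ/2 * ‖C (c - zs)‖^2) := by
  set r : H := B a + C c - b with hr
  -- vector identities
  have V1 : B (a - ys) + C (c - zs) = r := by
    simp only [map_sub]
    rw [hr, ← hfeas]; abel
  have V2 : B a + C c0 - b = r - C (c - c0) := by
    rw [hr]; simp only [map_sub]; abel
  have V3 : C (c - c0) = C (c - zs) - C (c0 - zs) := by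
    rw [← map_sub]; congr 1; abel
  -- subgradient inequalities in convenient form
  have F1 : f a - f ys ≤ ⟪uu, a - ys⟫ := by
    have := hu1 ys
    have e : ⟪uu, ys - a⟫ = -⟪uu, a - ys⟫ := by
      rw [show ys - a = -(a - ys) by abel, inner_neg_right]
    linarith
  have F2 : g c - g zs ≤ ⟪vv, c - zs⟫ := by
    have := hv1 zs
    have e : ⟪vv, zs - c⟫ = -⟪vv, c - zs⟫ := by
      rw [show zs - c = -(c - zs) by abel, inner_neg_right]
    linarith
  have E1 : ⟪h' c0, c - c0⟫ - ⟪h' c0, zs - c0⟫ = ⟪h' c0, c - zs⟫ := by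
    rw [← inner_sub_right, show (c - c0) - (zs - c0) = c - zs by abel]
  -- optimality equation, inner with (a - ys)
  have E2 : ⟪uu, a - ys⟫ = ⟪l, B (a - ys)⟫ - γ * ⟪B a + C c0 - b, B (a - ys)⟫
      - ⟪P (a - a0), a - ys⟫ := by
    have h0 := congrArg (fun w : Y => (inner ℝ w (a - ys) : ℝ)) hu2
    simp only [inner_add_left, inner_sub_left, real_inner_smul_left, inner_zero_left,
      ContinuousLinearMap.adjoint_inner_left] at h0
    simp only [inner_sub_left, inner_add_left]
    linarith
  have E3 : γ * ⟪B a + C c0 - b, B (a - ys)⟫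
      = γ * ⟪r, B (a - ys)⟫ - γ * ⟪C (c - c0), B (a - ys)⟫ := by
    rw [V2, inner_sub_left]; ring
  have E4 : ⟪vv, c - zs⟫ + ⟪h' c0, c - zs⟫ = ⟪l, C (c - zs)⟫ - γ * ⟪r, C (c - zs)⟫
      - ⟪Q (c - c0), c - zs⟫ := by
    have h0 := congrArg (fun w : Z => (inner ℝ w (c - zs) : ℝ)) hv2
    simp only [inner_add_left, inner_sub_left, real_inner_smul_left, inner_zero_left,
      ContinuousLinearMap.adjoint_inner_left] at h0
    linarith
  have E5 : ⟪l, B (a - ys)⟫ + ⟪l, C (c - zs)⟫ = ⟪l, r⟫ := by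
    rw [← inner_add_right, V1]
  have E6 : γ * ⟪r, B (a - ys)⟫ + γ * ⟪r, C (c - zs)⟫ = γ * ‖r‖^2 := by
    rw [← mul_add, ← inner_add_right, V1, real_inner_self_eq_norm_sq]
  have E6b : ⟪μ, B (a - ys)⟫ + ⟪μ, C (c - zs)⟫ = ⟪μ, r⟫ := by
    rw [← inner_add_right, V1]
  -- lambda identity
  have E8 : ⟪l, r⟫ - γ * ‖r‖^2 + ⟪μ, r⟫
      = 1/(2*γ) * ‖l + μ‖^2 - 1/(2*γ) * ‖l' + μ‖^2 - γ/2 * ‖r‖^2 := by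
    have e8a : ⟪l' + μ, r⟫ = ⟪l, r⟫ - γ * ‖r‖^2 + ⟪μ, r⟫ := by
      rw [hl]
      simp only [inner_add_left, inner_sub_left, real_inner_smul_left,
        real_inner_self_eq_norm_sq]
    have e8b : γ • r = (l + μ) - (l' + μ) := by rw [hl]; abel
    have e8c : ⟪l' + μ, (l + μ) - (l' + μ)⟫
        = (‖l + μ‖^2 - ‖l' + μ‖^2 - ‖(l + μ) - (l' + μ)‖^2)/2 := inner_half_expand _ _
    have e8d : ‖(l + μ) - (l' + μ)‖^2 = γ^2 * ‖r‖^2 := by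
      rw [← e8b, norm_smul, Real.norm_eq_abs, abs_of_pos hγ, mul_pow]
    have e8e : ⟪l' + μ, (l + μ) - (l' + μ)⟫ = γ * ⟪l' + μ, r⟫ := by
      rw [← e8b, real_inner_smul_right]
    have hmul : γ * (⟪l, r⟫ - γ * ‖r‖^2 + ⟪μ, r⟫)
        = (‖l + μ‖^2 - ‖l' + μ‖^2)/2 - γ^2/2 * ‖r‖^2 := by
      rw [← e8a, ← e8e, e8c, e8d]; ring
    have hγ' : γ ≠ 0 := ne_of_gt hγ
    field_simp
    linarith [hmul]
  -- cross term
  have E9 : γ * ⟪C (c - c0), B (a - ys)⟫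
      = γ * ⟪C (c - c0), r⟫ - γ * ⟪C (c - c0), C (c - zs)⟫ := by
    rw [show B (a - ys) = r - C (c - zs) by rw [← V1]; abel, inner_sub_right]; ring
  have F6 : γ * ⟪C (c - c0), r⟫ ≤ γ/2 * ‖C (c - c0)‖^2 + γ/2 * ‖r‖^2 := by
    have h0 : 2 * ⟪C (c - c0), r⟫ ≤ ‖C (c - c0)‖^2 + ‖r‖^2 := by
      have := norm_sub_sq_real (C (c - c0)) r
      nlinarith [sq_nonneg ‖C (c - c0) - r‖]
    nlinarith [hγ.le]
  have E10 : γ * ⟪C (c - c0), C (c - zs)⟫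
      = γ * ((‖C (c - zs)‖^2 - ‖C (c0 - zs)‖^2 + ‖C (c - c0)‖^2)/2) := by
    congr 1
    rw [V3, inner_sub_left, real_inner_self_eq_norm_sq, norm_sub_sq_real,
      real_inner_comm (C (c0 - zs)) (C (c - zs))]
    ring
  -- P and Q terms
  have E11 : 2 * ⟪P (a - a0), a - ys⟫
      = ⟪a - ys, P (a - ys)⟫ + ⟪a - a0, P (a - a0)⟫ - ⟪a0 - ys, P (a0 - ys)⟫ := by
    have := sa_expand P hP (a - a0) (a - ys)
    rw [show (a - ys) - (a - a0) = a0 - ys by abel] at this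
    linarith
  have F7 : (0:ℝ) ≤ ⟪a - a0, P (a - a0)⟫ := hPpsd _
  have E12 : 2 * ⟪Q (c - c0), c - zs⟫
      = ⟪c - zs, Q (c - zs)⟫ + ⟪c - c0, Q (c - c0)⟫ - ⟪c0 - zs, Q (c0 - zs)⟫ := by
    have := sa_expand Q hQ (c - c0) (c - zs)
    rw [show (c - zs) - (c - c0) = c0 - zs by abel] at this
    linarith
  have F8 : Lh * ‖c - c0‖^2 ≤ ⟪c - c0, Q (c - c0)⟫ := hQpsd _
  linarith [F1, F2, hdesc, hcg, E1, E2, E3, E4, E5, E6, E8, E9, F6, E10, E11, F7,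
    E12, F8]
end Key

set_option maxHeartbeats 2000000 in
/-- O(1/t) ergodic rate of the linearized ADMM with constant parameters. -/
theorem stmt_11 {Y Z H : Type*}
    [NormedAddCommGroup Y] [InnerProductSpace ℝ Y] [FiniteDimensional ℝ Y]
    [NormedAddCommGroup Z] [InnerProductSpace ℝ Z] [FiniteDimensional ℝ Z]
    [NormedAddCommGroup H] [InnerProductSpace ℝ H] [FiniteDimensional ℝ H]
    (B : Y →L[ℝ] H) (C : Z →L[ℝ] H) (b : H)
    (f : Y → ℝ) (hf : ConvexOn ℝ Set.univ f)
    (g : Z → ℝ) (hg : ConvexOn ℝ Set.univ g)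
    (h : Z → ℝ) (h' : Z → Z) (Lh : ℝ) (hLh : 0 ≤ Lh)
    (hh : ConvexOn ℝ Set.univ h)
    (hgrad : ∀ z : Z, HasGradientAt h (h' z) z)
    (hlip : ∀ z z' : Z, ‖h' z - h' z'‖ ≤ Lh * ‖z - z'‖)
    (γ : ℝ) (hγ : 0 < γ)
    (P : Y →L[ℝ] Y) (hP : IsSelfAdjoint P) (hPpsd : ∀ v : Y, 0 ≤ ⟪v, P v⟫)
    (Q : Z →L[ℝ] Z) (hQ : IsSelfAdjoint Q) (hQpsd : ∀ v : Z, Lh * ‖v‖ ^ 2 ≤ ⟪v, Q v⟫)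
    (y : ℕ → Y) (z : ℕ → Z) (lam : ℕ → H)
    (hlam1 : lam 1 = 0)
    (hopty : ∀ k : ℕ, 1 ≤ k → ∃ u : Y,
      (∀ y' : Y, f y' ≥ f (y (k+1)) + ⟪u, y' - y (k+1)⟫) ∧
      u - (ContinuousLinearMap.adjoint B) (lam k)
        + γ • (ContinuousLinearMap.adjoint B) (B (y (k+1)) + C (z k) - b)
        + P (y (k+1) - y k) = 0)
    (hoptz : ∀ k : ℕ, 1 ≤ k → ∃ v : Z,
      (∀ z' : Z, g z' ≥ g (z (k+1)) + ⟪v, z' - z (k+1)⟫) ∧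
      v + h' (z k) - (ContinuousLinearMap.adjoint C) (lam k)
        + γ • (ContinuousLinearMap.adjoint C) (B (y (k+1)) + C (z (k+1)) - b)
        + Q (z (k+1) - z k) = 0)
    (hlamup : ∀ k : ℕ, 1 ≤ k → lam (k+1) = lam k - γ • (B (y (k+1)) + C (z (k+1)) - b))
    (ys : Y) (zs : Z) (ls : H)
    (hfeas : B ys + C zs = b) (hls : ls ≠ 0)
    (hky : ∀ y' : Y, f y' ≥ f ys + ⟪(ContinuousLinearMap.adjoint B) ls, y' - ys⟫)
    (hkz : ∀ z' : Z, g z' ≥ g zs + ⟪(ContinuousLinearMap.adjoint C) ls - h' zs, z' - zs⟫) :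
    ∀ t : ℕ, 1 ≤ t → ∀ (yt : Y) (zt : Z),
      yt = (t : ℝ)⁻¹ • ∑ k ∈ Finset.Icc 1 t, y (k+1) →
      zt = (t : ℝ)⁻¹ • ∑ k ∈ Finset.Icc 1 t, z (k+1) →
      |(f yt + g zt + h zt) - (f ys + g zs + h zs)|
          ≤ (1 / (2 * (t : ℝ))) * (4 * ‖ls‖ ^ 2 / γ + ⟪y 1 - ys, P (y 1 - ys)⟫
              + (⟪z 1 - zs, Q (z 1 - zs)⟫ + γ * ‖C (z 1 - zs)‖ ^ 2)) ∧
      ‖B yt + C zt - b‖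
          ≤ (1 / (2 * (t : ℝ) * ‖ls‖)) * (4 * ‖ls‖ ^ 2 / γ + ⟪y 1 - ys, P (y 1 - ys)⟫
              + (⟪z 1 - zs, Q (z 1 - zs)⟫ + γ * ‖C (z 1 - zs)‖ ^ 2)) := by
  classical
  set Φ : H → ℕ → ℝ := fun μ k => 1/(2*γ) * ‖lam k + μ‖^2
      + 1/2 * ⟪y k - ys, P (y k - ys)⟫
      + 1/2 * ⟪z k - zs, Q (z k - zs)⟫ + γ/2 * ‖C (z k - zs)‖^2 with hΦ
  have key : ∀ (μ : H) (k : ℕ), 1 ≤ k →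
      (f (y (k+1)) + g (z (k+1)) + h (z (k+1))) - (f ys + g zs + h zs)
        + ⟪μ, B (y (k+1)) + C (z (k+1)) - b⟫ ≤ Φ μ k - Φ μ (k+1) := by
    intro μ k hk
    obtain ⟨uu, hu1, hu2⟩ := hopty k hk
    obtain ⟨vv, hv1, hv2⟩ := hoptz k hk
    have := admm_key B C b f g h h' Lh γ hγ P hP hPpsd Q hQ hQpsd
      (y (k+1)) (y k) (z (k+1)) (z k) (lam k) (lam (k+1)) μ ys zs hfeas
      (hlamup k hk) g uu hu1 hu2 vv hv1 hv2
      (descent_lemma_s11 hLh hgrad hlip (z k) (z (k+1)))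
      (conv_grad hh hgrad (z k) zs)
    simpa [hΦ] using this
  have Φnonneg : ∀ (μ : H) (k : ℕ), 0 ≤ Φ μ k := by
    intro μ k
    have h1 : (0:ℝ) ≤ 1/(2*γ) * ‖lam k + μ‖^2 := by positivity
    have h2 := hPpsd (y k - ys)
    have h3 := hQpsd (z k - zs)
    have h4 : (0:ℝ) ≤ Lh * ‖z k - zs‖^2 := by positivity
    have h5 : (0:ℝ) ≤ γ/2 * ‖C (z k - zs)‖^2 := by positivity
    simp only [hΦ]
    linarith
  intro t ht yt zt hyt hzt
  have htR : (0:ℝ) < (t:ℝ) := by exact_mod_cast Nat.lt_of_lt_of_le Nat.zero_lt_one ht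
  have htne : (t:ℝ) ≠ 0 := ne_of_gt htR
  have hcard : (Finset.Icc 1 t).card = t := by rw [Nat.card_Icc]; omega
  have hwsum : ∑ _k ∈ Finset.Icc 1 t, (t:ℝ)⁻¹ = 1 := by
    rw [Finset.sum_const, hcard, nsmul_eq_mul, mul_inv_cancel₀ htne]
  -- telescoping sum
  have hsum : ∀ μ : H, ∑ k ∈ Finset.Icc 1 t,
      ((f (y (k+1)) + g (z (k+1)) + h (z (k+1))) - (f ys + g zs + h zs)
        + ⟪μ, B (y (k+1)) + C (z (k+1)) - b⟫) ≤ Φ μ 1 := by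
    intro μ
    have step1 : ∑ k ∈ Finset.Icc 1 t,
        ((f (y (k+1)) + g (z (k+1)) + h (z (k+1))) - (f ys + g zs + h zs)
          + ⟪μ, B (y (k+1)) + C (z (k+1)) - b⟫)
        ≤ ∑ k ∈ Finset.Icc 1 t, (Φ μ k - Φ μ (k+1)) := by
      apply Finset.sum_le_sum
      intro k hk
      exact key μ k (Finset.mem_Icc.mp hk).1
    have step2 : ∑ k ∈ Finset.Icc 1 t, (Φ μ k - Φ μ (k+1)) = Φ μ 1 - Φ μ (t+1) := by
      rw [show Finset.Icc 1 t = Finset.Ico 1 (t+1) from (Finset.Ico_add_one_right_eq_Icc 1 t).symm,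
        Finset.sum_Ico_eq_sum_range]
      simp only [Nat.add_sub_cancel]
      have e : ∀ i, Φ μ (1 + i) - Φ μ (1 + i + 1)
          = (fun j => Φ μ (j + 1)) i - (fun j => Φ μ (j + 1)) (i + 1) := by
        intro i
        simp only
        rw [Nat.add_comm 1 i]
      rw [Finset.sum_congr rfl (fun i _ => e i)]
      exact Finset.sum_range_sub' (fun j => Φ μ (j + 1)) t
    calc _ ≤ ∑ k ∈ Finset.Icc 1 t, (Φ μ k - Φ μ (k+1)) := step1
      _ = Φ μ 1 - Φ μ (t+1) := step2
      _ ≤ Φ μ 1 := by linarith [Φnonneg μ (t+1)]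
  -- Jensen
  have hfJ : (t:ℝ) * f yt ≤ ∑ k ∈ Finset.Icc 1 t, f (y (k+1)) := by
    have hJ : f yt ≤ ∑ k ∈ Finset.Icc 1 t, (t:ℝ)⁻¹ * f (y (k+1)) := by
      rw [hyt, Finset.smul_sum]
      exact hf.map_sum_le (fun _ _ => by positivity) hwsum (fun _ _ => Set.mem_univ _)
    have := mul_le_mul_of_nonneg_left hJ htR.le
    rwa [← Finset.mul_sum, mul_inv_cancel_left₀ htne] at this
  have hgJ : (t:ℝ) * g zt ≤ ∑ k ∈ Finset.Icc 1 t, g (z (k+1)) := by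
    have hJ : g zt ≤ ∑ k ∈ Finset.Icc 1 t, (t:ℝ)⁻¹ * g (z (k+1)) := by
      rw [hzt, Finset.smul_sum]
      exact hg.map_sum_le (fun _ _ => by positivity) hwsum (fun _ _ => Set.mem_univ _)
    have := mul_le_mul_of_nonneg_left hJ htR.le
    rwa [← Finset.mul_sum, mul_inv_cancel_left₀ htne] at this
  have hhJ : (t:ℝ) * h zt ≤ ∑ k ∈ Finset.Icc 1 t, h (z (k+1)) := by
    have hJ : h zt ≤ ∑ k ∈ Finset.Icc 1 t, (t:ℝ)⁻¹ * h (z (k+1)) := by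
      rw [hzt, Finset.smul_sum]
      exact hh.map_sum_le (fun _ _ => by positivity) hwsum (fun _ _ => Set.mem_univ _)
    have := mul_le_mul_of_nonneg_left hJ htR.le
    rwa [← Finset.mul_sum, mul_inv_cancel_left₀ htne] at this
  -- residual averaging
  have hrt : (t:ℝ) • (B yt + C zt - b)
      = ∑ k ∈ Finset.Icc 1 t, (B (y (k+1)) + C (z (k+1)) - b) := by
    have e1 : B yt = (t:ℝ)⁻¹ • ∑ k ∈ Finset.Icc 1 t, B (y (k+1)) := by
      rw [hyt, map_smul, map_sum]
    have e2 : C zt = (t:ℝ)⁻¹ • ∑ k ∈ Finset.Icc 1 t, C (z (k+1)) := by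
      rw [hzt, map_smul, map_sum]
    have e3 : ∑ k ∈ Finset.Icc 1 t, (B (y (k+1)) + C (z (k+1)) - b)
        = (∑ k ∈ Finset.Icc 1 t, B (y (k+1))) + (∑ k ∈ Finset.Icc 1 t, C (z (k+1)))
          - (t:ℝ) • b := by
      rw [Finset.sum_sub_distrib, Finset.sum_add_distrib, Finset.sum_const, hcard]
      congr 1
      exact (Nat.cast_smul_eq_nsmul ℝ t b).symm
    rw [e1, e2, e3, smul_sub, smul_add, smul_smul, smul_smul,
      mul_inv_cancel₀ htne, one_smul, one_smul]
  have hinner : ∀ μ : H, (t:ℝ) * ⟪μ, B yt + C zt - b⟫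
      = ∑ k ∈ Finset.Icc 1 t, ⟪μ, B (y (k+1)) + C (z (k+1)) - b⟫ := by
    intro μ
    rw [← inner_sum, ← hrt, real_inner_smul_right]
  -- main inequality for every μ
  have hmain : ∀ μ : H, (t:ℝ) * ((f yt + g zt + h zt) - (f ys + g zs + h zs)
      + ⟪μ, B yt + C zt - b⟫) ≤ Φ μ 1 := by
    intro μ
    have h1 := hsum μ
    rw [Finset.sum_add_distrib, Finset.sum_sub_distrib, Finset.sum_const, hcard,
      nsmul_eq_mul, Finset.sum_add_distrib, Finset.sum_add_distrib] at h1
    have h2 := hinner μ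
    nlinarith [hfJ, hgJ, hhJ]
  -- abbreviations
  set R : H := B yt + C zt - b with hR
  set gap : ℝ := (f yt + g zt + h zt) - (f ys + g zs + h zs) with hgap
  set X : ℝ := 4 * ‖ls‖ ^ 2 / γ + ⟪y 1 - ys, P (y 1 - ys)⟫
      + (⟪z 1 - zs, Q (z 1 - zs)⟫ + γ * ‖C (z 1 - zs)‖ ^ 2) with hX
  have hls0 : (0:ℝ) < ‖ls‖ := norm_pos_iff.mpr hls
  -- lower bound on the gap
  have hlow : ⟪ls, R⟫ ≤ gap := by
    have e1 := hky yt
    have e2 := hkz zt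
    have e3 := conv_grad hh hgrad zs zt
    rw [ContinuousLinearMap.adjoint_inner_left] at e1
    rw [inner_sub_left, ContinuousLinearMap.adjoint_inner_left] at e2
    have e4 : ⟪ls, B (yt - ys)⟫ + ⟪ls, C (zt - zs)⟫ = ⟪ls, R⟫ := by
      rw [← inner_add_right]
      congr 1
      simp only [map_sub]
      rw [hR, ← hfeas]
      abel
    rw [hgap]
    linarith
  have hlow2 : -(‖ls‖ * ‖R‖) ≤ gap := by
    have := abs_real_inner_le_norm ls R
    have h2 := neg_abs_le (⟪ls, R⟫ : ℝ)
    linarith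
  -- value of Φ at 1
  have hΦ1 : ∀ μ : H, Φ μ 1 = 1/(2*γ) * ‖μ‖^2 + 1/2 * ⟪y 1 - ys, P (y 1 - ys)⟫
      + 1/2 * ⟪z 1 - zs, Q (z 1 - zs)⟫ + γ/2 * ‖C (z 1 - zs)‖^2 := by
    intro μ
    simp only [hΦ, hlam1, zero_add]
  -- objective upper bound
  have hup : (t:ℝ) * gap ≤ 1/2 * ⟪y 1 - ys, P (y 1 - ys)⟫
      + 1/2 * ⟪z 1 - zs, Q (z 1 - zs)⟫ + γ/2 * ‖C (z 1 - zs)‖^2 := by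
    have := hmain 0
    rw [hΦ1 0] at this
    simp only [inner_zero_left, add_zero, norm_zero, ne_eq, OfNat.ofNat_ne_zero,
      not_false_iff, zero_pow, mul_zero, zero_add] at this
    linarith [this]
  -- feasibility bound
  have hfb : (t:ℝ) * (‖ls‖ * ‖R‖) ≤ 2 * ‖ls‖^2/γ + 1/2 * ⟪y 1 - ys, P (y 1 - ys)⟫
      + 1/2 * ⟪z 1 - zs, Q (z 1 - zs)⟫ + γ/2 * ‖C (z 1 - zs)‖^2 := by
    by_cases hR0 : R = 0
    · rw [hR0, norm_zero, mul_zero, mul_zero]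
      have h2 := hPpsd (y 1 - ys)
      have h3 := hQpsd (z 1 - zs)
      have h4 : (0:ℝ) ≤ Lh * ‖z 1 - zs‖^2 := by positivity
      have h5 : (0:ℝ) ≤ γ/2 * ‖C (z 1 - zs)‖^2 := by positivity
      have h6 : (0:ℝ) ≤ 2 * ‖ls‖^2/γ := by positivity
      linarith
    · have hRn : (0:ℝ) < ‖R‖ := norm_pos_iff.mpr hR0
      set μ : H := (2 * ‖ls‖ / ‖R‖) • R with hμ
      have hμR : ⟪μ, R⟫ = 2 * ‖ls‖ * ‖R‖ := by
        rw [hμ, real_inner_smul_left, real_inner_self_eq_norm_sq]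
        field_simp
      have hμn : ‖μ‖^2 = 4 * ‖ls‖^2 := by
        rw [hμ, norm_smul, Real.norm_eq_abs, abs_of_nonneg (by positivity)]
        field_simp
        ring
      have hm := hmain μ
      rw [hΦ1 μ, hμn, hμR] at hm
      have hl2 := mul_le_mul_of_nonneg_left hlow2 htR.le
      have hq : 1/(2*γ) * (4 * ‖ls‖^2) = 2 * ‖ls‖^2/γ := by
        field_simp
        ring
      nlinarith [hm, hl2]
  constructor
  · rw [abs_le]
    constructor
    · -- lower bound
      have h1 : ‖ls‖ * ‖R‖ ≤ 1 / (2 * (t:ℝ)) * X := by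
        apply (mul_le_mul_iff_right₀ htR).mp
        have e : (t:ℝ) * (1 / (2 * (t:ℝ)) * X) = X / 2 := by field_simp; try ring
        rw [e, hX]
        have e1 : (4 * ‖ls‖ ^ 2 / γ + ⟪y 1 - ys, P (y 1 - ys)⟫
            + (⟪z 1 - zs, Q (z 1 - zs)⟫ + γ * ‖C (z 1 - zs)‖ ^ 2))/2
            = 2 * ‖ls‖^2/γ + 1/2 * ⟪y 1 - ys, P (y 1 - ys)⟫
              + 1/2 * ⟪z 1 - zs, Q (z 1 - zs)⟫ + γ/2 * ‖C (z 1 - zs)‖^2 := by ring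
        linarith [hfb]
      linarith [hlow2]
    · -- upper bound
      apply (mul_le_mul_iff_right₀ htR).mp
      have e : (t:ℝ) * (1 / (2 * (t:ℝ)) * X) = X / 2 := by field_simp; try ring
      rw [e, hX]
      have e1 : (4 * ‖ls‖ ^ 2 / γ + ⟪y 1 - ys, P (y 1 - ys)⟫
            + (⟪z 1 - zs, Q (z 1 - zs)⟫ + γ * ‖C (z 1 - zs)‖ ^ 2))/2
            = 2 * ‖ls‖^2/γ + 1/2 * ⟪y 1 - ys, P (y 1 - ys)⟫
              + 1/2 * ⟪z 1 - zs, Q (z 1 - zs)⟫ + γ/2 * ‖C (z 1 - zs)‖^2 := by ring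
      have h2 : (0:ℝ) ≤ 2 * ‖ls‖^2/γ := by positivity
      linarith [hup]
  · have h1 : ‖ls‖ * ‖R‖ ≤ 1 / (2 * (t:ℝ)) * X := by
      apply (mul_le_mul_iff_right₀ htR).mp
      have e : (t:ℝ) * (1 / (2 * (t:ℝ)) * X) = X / 2 := by field_simp; try ring
      rw [e, hX]
      have e1 : (4 * ‖ls‖ ^ 2 / γ + ⟪y 1 - ys, P (y 1 - ys)⟫
            + (⟪z 1 - zs, Q (z 1 - zs)⟫ + γ * ‖C (z 1 - zs)‖ ^ 2))/2
            = 2 * ‖ls‖^2/γ + 1/2 * ⟪y 1 - ys, P (y 1 - ys)⟫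
              + 1/2 * ⟪z 1 - zs, Q (z 1 - zs)⟫ + γ/2 * ‖C (z 1 - zs)‖^2 := by ring
      linarith [hfb]
    have e2 : 1 / (2 * (t:ℝ) * ‖ls‖) * X = (1 / (2 * (t:ℝ)) * X) / ‖ls‖ := by
      field_simp
      try ring
    rw [e2, le_div_iff₀ hls0]
    linarith [h1]
end
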